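/- arXiv:1208.4414 — 7 statements merged into one kernel-verified Lean document; each statement's English description precedes it below -/
import Mathlib

section
/- If X₁, X₂ are nonnegative random variables with E[X₁]=E[X₂]=1 and E[X₂|X₁]=X₁ almost surely, then the Lorenz curves satisfy L₁(u) ≥ L₂(u) for all u ∈ [0,1]. -/
open MeasureTheory ProbabilityTheory
open scoped ProbabilityTheory

/-- Cumulative distribution function of a random variable `X`. -/
noncomputable def cdfOf {Ω : Type*} [MeasureSpace Ω] (X : Ω → ℝ) (x : ℝ) : ℝ :=
  (ℙ {ω | X ω ≤ x}).toReal

/-- Generalized inverse (quantile function) of a CDF `F`: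
`F⁻¹(u) = inf {x : F x ≥ u}`. -/
noncomputable def quantile (F : ℝ → ℝ) (u : ℝ) : ℝ :=
  sInf {x : ℝ | u ≤ F x}

/-- Lorenz curve of a random variable `X`: `L(u) = ∫₀ᵘ F⁻¹(τ) dτ`. -/
noncomputable def lorenz {Ω : Type*} [MeasureSpace Ω] (X : Ω → ℝ) (u : ℝ) : ℝ :=
  ∫ τ in (0:ℝ)..u, quantile (cdfOf X) τ

namespace LorenzAux

open Set
open scoped ENNReal

/-! ### Lemmas about the cdf and its generalized inverse, at the level of measures on `ℝ`. -/

section Mu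

variable {μ : Measure ℝ} [IsProbabilityMeasure μ]

lemma cdf_neg_eq_zero (hsupp : μ (Set.Iio 0) = 0) {x : ℝ} (hx : x < 0) : cdf μ x = 0 := by
  have : μ (Set.Iic x) = 0 :=
    measure_mono_null (fun y hy => lt_of_le_of_lt hy hx) hsupp
  rw [cdf_eq_real, measureReal_def, this, ENNReal.toReal_zero]

lemma quantile_of_nonpos {F : ℝ → ℝ} (hF : ∀ x, 0 ≤ F x) {τ : ℝ} (hτ : τ ≤ 0) :
    quantile F τ = 0 := by
  have : {x : ℝ | τ ≤ F x} = Set.univ := by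
    ext x; simp only [Set.mem_setOf_eq, Set.mem_univ, iff_true]
    exact hτ.trans (hF x)
  rw [quantile, this, Real.sInf_of_not_bddBelow not_bddBelow_univ]

lemma quantile_of_one_lt {F : ℝ → ℝ} (hF : ∀ x, F x ≤ 1) {τ : ℝ} (hτ : 1 < τ) :
    quantile F τ = 0 := by
  have : {x : ℝ | τ ≤ F x} = ∅ := by
    ext x; simp only [Set.mem_setOf_eq, Set.mem_empty_iff_false, iff_false, not_le]
    exact lt_of_le_of_lt (hF x) hτ
  rw [quantile, this, Real.sInf_empty]

lemma mem_nonneg (hsupp : μ (Set.Iio 0) = 0) {τ x : ℝ} (hτ : 0 < τ)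
    (hx : x ∈ {x : ℝ | τ ≤ cdf μ x}) : 0 ≤ x := by
  by_contra hneg
  push_neg at hneg
  have := cdf_neg_eq_zero hsupp hneg
  simp only [Set.mem_setOf_eq, this] at hx
  linarith

lemma quantile_cdf_nonneg (hsupp : μ (Set.Iio 0) = 0) (τ : ℝ) : 0 ≤ quantile (cdf μ) τ := by
  rcases le_or_gt τ 0 with h | h
  · rw [quantile_of_nonpos (cdf_nonneg μ) h]
  · exact Real.sInf_nonneg (fun x hx => mem_nonneg hsupp h hx)

lemma quantile_le_of_le_cdf (hsupp : μ (Set.Iio 0) = 0) {τ x : ℝ} (hτ : 0 < τ)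
    (h : τ ≤ cdf μ x) : quantile (cdf μ) τ ≤ x :=
  csInf_le ⟨0, fun y hy => mem_nonneg hsupp hτ hy⟩ h

lemma le_cdf_quantile {τ : ℝ} (hτ1 : τ < 1) :
    τ ≤ cdf μ (quantile (cdf μ) τ) := by
  have hne : {x : ℝ | τ ≤ cdf μ x}.Nonempty := by
    have h1 : ∀ᶠ y in nhds (1:ℝ), τ ≤ y := eventually_ge_nhds hτ1
    exact ((tendsto_cdf_atTop μ).eventually h1).exists
  have key : ∀ x, quantile (cdf μ) τ < x → τ ≤ cdf μ x := by
    intro x hx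
    obtain ⟨s, hs, hsx⟩ := exists_lt_of_csInf_lt hne hx
    exact le_trans hs (monotone_cdf μ hsx.le)
  set q := quantile (cdf μ) τ
  have hc : Filter.Tendsto (cdf μ : ℝ → ℝ) (nhdsWithin q (Set.Ioi q)) (nhds (cdf μ q)) :=
    ((cdf μ).right_continuous q).tendsto.mono_left
      (nhdsWithin_mono q Set.Ioi_subset_Ici_self)
  exact ge_of_tendsto hc (eventually_mem_nhdsWithin.mono (fun x hx => key x hx))

lemma quantile_le_iff (hsupp : μ (Set.Iio 0) = 0) {τ x : ℝ} (hτ0 : 0 < τ) (hτ1 : τ < 1) :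
    quantile (cdf μ) τ ≤ x ↔ τ ≤ cdf μ x := by
  constructor
  · intro h
    exact le_trans (le_cdf_quantile hτ1) (monotone_cdf μ h)
  · exact quantile_le_of_le_cdf hsupp hτ0

lemma measurable_quantile_cdf (hsupp : μ (Set.Iio 0) = 0) :
    Measurable (quantile (cdf μ)) := by
  apply measurable_of_Iic
  intro x
  rcases lt_or_ge x 0 with hx | hx
  · have : quantile (cdf μ) ⁻¹' Set.Iic x = ∅ := by
      ext τ
      simp only [Set.mem_preimage, Set.mem_Iic, Set.mem_empty_iff_false, iff_false, not_le]
      exact lt_of_lt_of_le hx (quantile_cdf_nonneg hsupp τ)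
    rw [this]; exact MeasurableSet.empty
  · have hset : quantile (cdf μ) ⁻¹' Set.Iic x =
        (Set.Iic 0 ∪ Set.Ioi 1 ∪ (Set.Ioo 0 1 ∩ Set.Iic (cdf μ x))) ∪
          ({1} ∩ quantile (cdf μ) ⁻¹' Set.Iic x) := by
      ext τ
      simp only [Set.mem_preimage, Set.mem_Iic, Set.mem_union, Set.mem_inter_iff,
        Set.mem_Ioo, Set.mem_Ioi, Set.mem_singleton_iff, Set.mem_setOf_eq]
      constructor
      · intro h
        rcases le_or_gt τ 0 with h0 | h0
        · exact Or.inl (Or.inl (Or.inl h0))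
        rcases lt_trichotomy τ 1 with h1 | h1 | h1
        · exact Or.inl (Or.inr ⟨⟨h0, h1⟩, (quantile_le_iff hsupp h0 h1).mp h⟩)
        · exact Or.inr ⟨h1, h⟩
        · exact Or.inl (Or.inl (Or.inr h1))
      · rintro (((h0 | h1) | ⟨⟨h0, h1⟩, hle⟩) | ⟨-, h⟩)
        · rw [quantile_of_nonpos (cdf_nonneg μ) h0]; exact hx
        · rw [quantile_of_one_lt (cdf_le_one μ) h1]; exact hx
        · exact quantile_le_of_le_cdf hsupp h0 hle
        · exact h
    rw [hset]
    refine MeasurableSet.union (MeasurableSet.union (MeasurableSet.union measurableSet_Iic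
      measurableSet_Ioi) (MeasurableSet.inter measurableSet_Ioo measurableSet_Iic)) ?_
    exact Set.Countable.measurableSet ((Set.countable_singleton 1).mono Set.inter_subset_left)

lemma volume_Ici_inter_Ioc {q c : ℝ} (hq : 0 ≤ q) :
    volume (Set.Ici q ∩ Set.Ioc 0 c) = ENNReal.ofReal (c - q) := by
  rcases eq_or_lt_of_le hq with h | h
  · have : Set.Ici q ∩ Set.Ioc 0 c = Set.Ioc 0 c := by
      rw [← h]
      ext t; simp only [Set.mem_inter_iff, Set.mem_Ici, Set.mem_Ioc]
      exact ⟨fun ht => ht.2, fun ht => ⟨ht.1.le, ht⟩⟩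
    rw [this, Real.volume_Ioc, ← h, sub_zero]
  · have : Set.Ici q ∩ Set.Ioc 0 c = Set.Icc q c := by
      ext t; simp only [Set.mem_inter_iff, Set.mem_Ici, Set.mem_Ioc, Set.mem_Icc]
      exact ⟨fun ht => ⟨ht.1, ht.2.2⟩, fun ht => ⟨ht.1, lt_of_lt_of_le h ht.1, ht.2⟩⟩
    rw [this, Real.volume_Icc]

lemma ofReal_max_zero (a : ℝ) : ENNReal.ofReal (max a 0) = ENNReal.ofReal a := by
  rcases le_total a 0 with h | h
  · rw [max_eq_right h, ENNReal.ofReal_zero, eq_comm, ENNReal.ofReal_eq_zero.mpr h]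
  · rw [max_eq_left h]

lemma ae_restrict_ne (s : Set ℝ) (a : ℝ) :
    ∀ᵐ (τ : ℝ) ∂(volume.restrict s), τ ≠ a := by
  rw [ae_iff]
  have hsub : {x : ℝ | ¬ x ≠ a} = {a} := by ext x; simp [not_not]
  rw [hsub]
  exact le_antisymm (le_trans (Measure.restrict_apply_le _ _) (by simp)) zero_le

lemma swap_key (hsupp : μ (Set.Iio 0) = 0) {c u : ℝ} (hu0 : 0 < u) (hu1 : u ≤ 1) :
    ∫⁻ t in Set.Ioc 0 c, ENNReal.ofReal (min u (cdf μ t)) =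
      ∫⁻ τ in Set.Ioc 0 u, ENNReal.ofReal (c - quantile (cdf μ) τ) := by
  have hFmeas : Measurable (cdf μ : ℝ → ℝ) := (monotone_cdf μ).measurable
  set S : Set (ℝ × ℝ) := {p : ℝ × ℝ | p.2 ≤ cdf μ p.1} with hS
  have hSmeas : MeasurableSet S := measurableSet_le measurable_snd (hFmeas.comp measurable_fst)
  have hSind : Measurable (S.indicator (1 : ℝ × ℝ → ℝ≥0∞)) :=
    measurable_one.indicator hSmeas
  have hLHS : ∀ t : ℝ, ENNReal.ofReal (min u (cdf μ t)) =
      ∫⁻ τ in Set.Ioc 0 u, S.indicator 1 (t, τ) := by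
    intro t
    have h1 : (fun τ : ℝ => S.indicator (1 : ℝ × ℝ → ℝ≥0∞) (t, τ)) =
        (Set.Iic (cdf μ t)).indicator (1 : ℝ → ℝ≥0∞) := by
      funext τ
      simp only [Set.indicator_apply, hS, Set.mem_setOf_eq, Set.mem_Iic, Pi.one_apply]
    rw [h1, lintegral_indicator_one measurableSet_Iic,
      Measure.restrict_apply measurableSet_Iic]
    have h2 : Set.Iic (cdf μ t) ∩ Set.Ioc 0 u = Set.Ioc 0 (min u (cdf μ t)) := by
      ext τ
      simp only [Set.mem_inter_iff, Set.mem_Iic, Set.mem_Ioc, lt_min_iff, le_min_iff]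
      constructor
      · rintro ⟨h1', h2', h3'⟩; exact ⟨h2', h3', h1'⟩
      · rintro ⟨h1', h2', h3'⟩; exact ⟨h3', h1', h2'⟩
    rw [h2, Real.volume_Ioc, sub_zero]
  have hmeas : AEMeasurable (Function.uncurry fun t τ => S.indicator (1 : ℝ × ℝ → ℝ≥0∞) (t, τ))
      ((volume.restrict (Set.Ioc 0 c)).prod (volume.restrict (Set.Ioc 0 u))) := by
    have : (Function.uncurry fun t τ => S.indicator (1 : ℝ × ℝ → ℝ≥0∞) (t, τ)) =
        S.indicator 1 := by
      funext p; rfl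
    rw [this]
    exact hSind.aemeasurable
  calc ∫⁻ t in Set.Ioc 0 c, ENNReal.ofReal (min u (cdf μ t))
      = ∫⁻ t in Set.Ioc 0 c, ∫⁻ τ in Set.Ioc 0 u, S.indicator 1 (t, τ) :=
        lintegral_congr hLHS
    _ = ∫⁻ τ in Set.Ioc 0 u, ∫⁻ t in Set.Ioc 0 c, S.indicator 1 (t, τ) :=
        lintegral_lintegral_swap hmeas
    _ = ∫⁻ τ in Set.Ioc 0 u, ENNReal.ofReal (c - quantile (cdf μ) τ) := by
        apply lintegral_congr_ae
        filter_upwards [ae_restrict_mem measurableSet_Ioc, ae_restrict_ne (Set.Ioc 0 u) 1]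
          with τ hτ hτ1
        have hτ0 : 0 < τ := hτ.1
        have hτlt1 : τ < 1 := lt_of_le_of_ne (hτ.2.trans hu1) hτ1
        have h1 : (fun t : ℝ => S.indicator (1 : ℝ × ℝ → ℝ≥0∞) (t, τ)) =
            (Set.Ici (quantile (cdf μ) τ)).indicator (1 : ℝ → ℝ≥0∞) := by
          funext t
          simp only [Set.indicator_apply, hS, Set.mem_setOf_eq, Set.mem_Ici, Pi.one_apply]
          exact if_congr (quantile_le_iff hsupp hτ0 hτlt1).symm rfl rfl
        rw [h1, lintegral_indicator_one measurableSet_Ici,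
          Measure.restrict_apply measurableSet_Ici,
          volume_Ici_inter_Ioc (quantile_cdf_nonneg hsupp τ)]

lemma C1 (hsupp : μ (Set.Iio 0) = 0) {c u : ℝ} (hu0 : 0 < u) (hu1 : u ≤ 1) :
    ∫⁻ τ in Set.Ioc 0 u, ENNReal.ofReal (c - quantile (cdf μ) τ) ≤
      ∫⁻ t in Set.Ioc 0 c, ENNReal.ofReal (cdf μ t) := by
  rw [← swap_key hsupp hu0 hu1]
  exact lintegral_mono fun t => ENNReal.ofReal_le_ofReal (min_le_right _ _)

lemma C2 (hsupp : μ (Set.Iio 0) = 0) {u : ℝ} (hu0 : 0 < u) (hu1 : u < 1) :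
    ∫⁻ t in Set.Ioc 0 (quantile (cdf μ) u), ENNReal.ofReal (cdf μ t) =
      ∫⁻ τ in Set.Ioc 0 u, ENNReal.ofReal (quantile (cdf μ) u - quantile (cdf μ) τ) := by
  rw [← swap_key hsupp hu0 hu1.le]
  apply lintegral_congr_ae
  filter_upwards [ae_restrict_mem measurableSet_Ioc,
    ae_restrict_ne (Set.Ioc 0 (quantile (cdf μ) u)) (quantile (cdf μ) u)] with t ht htne
  have htlt : t < quantile (cdf μ) u := lt_of_le_of_ne ht.2 htne
  have hFt : cdf μ t ≤ u := by
    by_contra hgt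
    push_neg at hgt
    exact absurd (quantile_le_of_le_cdf hsupp hu0 hgt.le) (not_le.mpr htlt)
  rw [min_eq_right hFt]

end Mu

/-! ### Lemmas at the level of random variables. -/

variable {Ω : Type*} [MeasureSpace Ω] [IsProbabilityMeasure (ℙ : Measure Ω)]
variable {X : Ω → ℝ}

lemma map_Iio_zero (hm : Measurable X) (hpos : ∀ ω, 0 ≤ X ω) :
    (Measure.map X (ℙ : Measure Ω)) (Set.Iio 0) = 0 := by
  rw [Measure.map_apply hm measurableSet_Iio]
  have : X ⁻¹' (Set.Iio 0) = ∅ := by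
    ext ω
    simp only [Set.mem_preimage, Set.mem_Iio, Set.mem_empty_iff_false, iff_false, not_lt]
    exact hpos ω
  rw [this, measure_empty]

lemma C3 (hm : Measurable X) (hpos : ∀ ω, 0 ≤ X ω) (c : ℝ) :
    ∫⁻ ω, ENNReal.ofReal (max (c - X ω) 0) ∂(ℙ : Measure Ω) =
      ∫⁻ t in Set.Ioc 0 c, ENNReal.ofReal (cdf (Measure.map X ℙ) t) := by
  have hmap : IsProbabilityMeasure (Measure.map X (ℙ : Measure Ω)) :=
    Measure.isProbabilityMeasure_map hm.aemeasurable
  set T : Set (ℝ × Ω) := {p | X p.2 ≤ p.1} with hT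
  have hTmeas : MeasurableSet T := measurableSet_le (hm.comp measurable_snd) measurable_fst
  have hstep1 : ∀ ω : Ω, ENNReal.ofReal (max (c - X ω) 0) =
      ∫⁻ t in Set.Ioc 0 c, T.indicator 1 (t, ω) := by
    intro ω
    have h1 : (fun t : ℝ => T.indicator (1 : ℝ × Ω → ℝ≥0∞) (t, ω)) =
        (Set.Ici (X ω)).indicator (1 : ℝ → ℝ≥0∞) := by
      funext t
      simp only [Set.indicator_apply, hT, Set.mem_setOf_eq, Set.mem_Ici, Pi.one_apply]
    rw [h1, lintegral_indicator_one measurableSet_Ici,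
      Measure.restrict_apply measurableSet_Ici, volume_Ici_inter_Ioc (hpos ω),
      ofReal_max_zero]
  have hmeas : AEMeasurable (Function.uncurry fun (ω : Ω) (t : ℝ) =>
      T.indicator (1 : ℝ × Ω → ℝ≥0∞) (t, ω))
      ((ℙ : Measure Ω).prod (volume.restrict (Set.Ioc 0 c))) := by
    have : (Function.uncurry fun (ω : Ω) (t : ℝ) => T.indicator (1 : ℝ × Ω → ℝ≥0∞) (t, ω)) =
        (T.indicator 1) ∘ Prod.swap := by
      funext p; rfl
    rw [this]
    exact ((measurable_one.indicator hTmeas).comp measurable_swap).aemeasurable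
  calc ∫⁻ ω, ENNReal.ofReal (max (c - X ω) 0) ∂(ℙ : Measure Ω)
      = ∫⁻ ω, (∫⁻ t in Set.Ioc 0 c, T.indicator 1 (t, ω)) ∂(ℙ : Measure Ω) :=
        lintegral_congr hstep1
    _ = ∫⁻ t in Set.Ioc 0 c, (∫⁻ ω, T.indicator 1 (t, ω) ∂(ℙ : Measure Ω)) :=
        lintegral_lintegral_swap hmeas
    _ = ∫⁻ t in Set.Ioc 0 c, ENNReal.ofReal (cdf (Measure.map X ℙ) t) := by
        apply lintegral_congr
        intro t
        have h1 : (fun ω : Ω => T.indicator (1 : ℝ × Ω → ℝ≥0∞) (t, ω)) =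
            (X ⁻¹' (Set.Iic t)).indicator (1 : Ω → ℝ≥0∞) := by
          funext ω
          by_cases h : X ω ≤ t
          · simp [hT, Set.indicator_apply, h]
          · simp [hT, Set.indicator_apply, h]
        rw [h1, lintegral_indicator_one (hm measurableSet_Iic),
          ← Measure.map_apply hm measurableSet_Iic, ofReal_cdf]

lemma C4 (hm : Measurable X) (hpos : ∀ ω, 0 ≤ X ω) :
    ∫⁻ τ in Set.Ioc 0 1, ENNReal.ofReal (quantile (cdf (Measure.map X ℙ)) τ) =
      ∫⁻ ω, ENNReal.ofReal (X ω) ∂(ℙ : Measure Ω) := by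
  have hmap : IsProbabilityMeasure (Measure.map X (ℙ : Measure Ω)) :=
    Measure.isProbabilityMeasure_map hm.aemeasurable
  set ν := Measure.map X (ℙ : Measure Ω) with hν
  have hsupp : ν (Set.Iio 0) = 0 := map_Iio_zero hm hpos
  have hFmeas : Measurable (cdf ν : ℝ → ℝ) := (monotone_cdf ν).measurable
  set U : Set (ℝ × ℝ) := {p | cdf ν p.1 < p.2} with hU
  have hUmeas : MeasurableSet U := measurableSet_lt (hFmeas.comp measurable_fst) measurable_snd
  have hmeas : AEMeasurable (Function.uncurry fun (t τ : ℝ) =>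
      U.indicator (1 : ℝ × ℝ → ℝ≥0∞) (t, τ))
      ((volume.restrict (Set.Ioi 0)).prod (volume.restrict (Set.Ioc 0 1))) := by
    have : (Function.uncurry fun (t τ : ℝ) => U.indicator (1 : ℝ × ℝ → ℝ≥0∞) (t, τ)) =
        U.indicator 1 := by funext p; rfl
    rw [this]
    exact (measurable_one.indicator hUmeas).aemeasurable
  have hstep1 : ∫⁻ τ in Set.Ioc 0 1, ENNReal.ofReal (quantile (cdf ν) τ) =
      ∫⁻ τ in Set.Ioc 0 1, ∫⁻ t in Set.Ioi 0, U.indicator 1 (t, τ) := by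
    apply lintegral_congr_ae
    filter_upwards [ae_restrict_mem measurableSet_Ioc, ae_restrict_ne (Set.Ioc 0 1) 1]
      with τ hτ hτne
    have hτ0 : 0 < τ := hτ.1
    have hτ1 : τ < 1 := lt_of_le_of_ne hτ.2 hτne
    have h1 : (fun t : ℝ => U.indicator (1 : ℝ × ℝ → ℝ≥0∞) (t, τ)) =
        ((cdf ν : ℝ → ℝ) ⁻¹' (Set.Iio τ)).indicator (1 : ℝ → ℝ≥0∞) := by
      funext t
      by_cases h : cdf ν t < τ
      · simp [hU, Set.indicator_apply, h]
      · simp [hU, Set.indicator_apply, h]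
    rw [h1, lintegral_indicator_one (hFmeas measurableSet_Iio),
      Measure.restrict_apply (hFmeas measurableSet_Iio)]
    have hset : (cdf ν : ℝ → ℝ) ⁻¹' (Set.Iio τ) ∩ Set.Ioi 0 =
        Set.Ioo 0 (quantile (cdf ν) τ) := by
      ext t
      simp only [Set.mem_inter_iff, Set.mem_preimage, Set.mem_Iio, Set.mem_Ioi, Set.mem_Ioo]
      constructor
      · rintro ⟨hlt, ht0⟩
        refine ⟨ht0, ?_⟩
        by_contra hge
        push_neg at hge
        exact absurd ((quantile_le_iff hsupp hτ0 hτ1).mp hge) (not_le.mpr hlt)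
      · rintro ⟨ht0, hlt⟩
        refine ⟨?_, ht0⟩
        by_contra hge
        push_neg at hge
        exact absurd ((quantile_le_iff hsupp hτ0 hτ1).mpr hge) (not_le.mpr hlt)
    rw [hset, Real.volume_Ioo, sub_zero]
  have hstep2 : ∫⁻ τ in Set.Ioc 0 1, ∫⁻ t in Set.Ioi 0, U.indicator 1 (t, τ) =
      ∫⁻ t in Set.Ioi 0, ν (Set.Ioi t) := by
    rw [← lintegral_lintegral_swap hmeas]
    apply lintegral_congr_ae
    filter_upwards [ae_restrict_mem measurableSet_Ioi] with t ht
    have h1 : (fun τ : ℝ => U.indicator (1 : ℝ × ℝ → ℝ≥0∞) (t, τ)) =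
        (Set.Ioi (cdf ν t)).indicator (1 : ℝ → ℝ≥0∞) := by
      funext τ
      simp only [Set.indicator_apply, hU, Set.mem_setOf_eq, Set.mem_Ioi, Pi.one_apply]
    rw [h1, lintegral_indicator_one measurableSet_Ioi,
      Measure.restrict_apply measurableSet_Ioi]
    have hset : Set.Ioi (cdf ν t) ∩ Set.Ioc 0 1 = Set.Ioc (cdf ν t) 1 := by
      ext τ
      simp only [Set.mem_inter_iff, Set.mem_Ioi, Set.mem_Ioc]
      constructor
      · rintro ⟨h1', h2', h3'⟩; exact ⟨h1', h3'⟩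
      · rintro ⟨h1', h2'⟩; exact ⟨h1', lt_of_le_of_lt (cdf_nonneg ν t) h1', h2'⟩
    rw [hset, Real.volume_Ioc]
    rw [ENNReal.ofReal_sub _ (cdf_nonneg ν t), ENNReal.ofReal_one, ofReal_cdf]
    have hcompl : ν (Set.Ioi t) = 1 - ν (Set.Iic t) := by
      rw [← Set.compl_Iic, measure_compl measurableSet_Iic (measure_ne_top _ _), measure_univ]
    rw [hcompl]
  rw [hstep1, hstep2, lintegral_eq_lintegral_meas_lt (ℙ : Measure Ω)
    (Filter.Eventually.of_forall hpos) hm.aemeasurable]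
  apply lintegral_congr_ae
  filter_upwards [ae_restrict_mem measurableSet_Ioi] with t ht
  rw [hν, Measure.map_apply hm measurableSet_Ioi]
  rfl

lemma jensen_pos_part {Ω' : Type*} {m m0 : MeasurableSpace Ω'} {μ : Measure Ω'}
    [IsFiniteMeasure μ] (hm : m ≤ m0) (X₁ X₂ : Ω' → ℝ)
    (h₁ : Integrable X₁ μ) (h₂ : Integrable X₂ μ)
    (hmart : μ[X₂|m] =ᵐ[μ] X₁) (c : ℝ) :
    ∫ ω, max (c - X₁ ω) 0 ∂μ ≤ ∫ ω, max (c - X₂ ω) 0 ∂μ := by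
  haveI : SigmaFinite (μ.trim hm) := by infer_instance
  have hg_int : Integrable (fun ω => max (c - X₂ ω) 0) μ :=
    ((integrable_const c).sub h₂).pos_part
  have hf_int : Integrable (fun ω => max (c - X₁ ω) 0) μ :=
    ((integrable_const c).sub h₁).pos_part
  have hsub : μ[fun ω => c - X₂ ω|m] =ᵐ[μ] fun ω => c - X₁ ω := by
    have h1 := condExp_sub (m := m) (μ := μ) (integrable_const c) h₂
    have h2 : μ[(fun _ => c : Ω' → ℝ)|m] = fun _ => c := condExp_const hm c
    filter_upwards [h1, hmart] with ω hω hω'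
    show (μ[(fun _ => c : Ω' → ℝ) - X₂|m]) ω = c - X₁ ω
    rw [hω, h2, Pi.sub_apply, hω']
  have hmono : μ[fun ω => c - X₂ ω|m] ≤ᵐ[μ] μ[fun ω => max (c - X₂ ω) 0|m] :=
    condExp_mono ((integrable_const c).sub h₂) hg_int
      (Filter.Eventually.of_forall fun ω => le_max_left _ _)
  have hnn : 0 ≤ᵐ[μ] μ[fun ω => max (c - X₂ ω) 0|m] :=
    condExp_nonneg (Filter.Eventually.of_forall fun ω => le_max_right _ _)
  have hpt : (fun ω => max (c - X₁ ω) 0) ≤ᵐ[μ] μ[fun ω => max (c - X₂ ω) 0|m] := by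
    filter_upwards [hsub, hmono, hnn] with ω h1 h2 h3
    exact max_le (h1 ▸ h2) h3
  calc ∫ ω, max (c - X₁ ω) 0 ∂μ ≤ ∫ ω, (μ[fun ω => max (c - X₂ ω) 0|m]) ω ∂μ :=
        integral_mono_ae hf_int integrable_condExp hpt
    _ = ∫ ω, max (c - X₂ ω) 0 ∂μ := integral_condExp hm

lemma integrableOn_quantile (hm : Measurable X) (hpos : ∀ ω, 0 ≤ X ω)
    (h₁ : Integrable X (ℙ : Measure Ω)) {u : ℝ} (hu : u ≤ 1) :
    IntegrableOn (quantile (cdf (Measure.map X ℙ))) (Set.Ioc 0 u) volume := by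
  have hmap : IsProbabilityMeasure (Measure.map X (ℙ : Measure Ω)) :=
    Measure.isProbabilityMeasure_map hm.aemeasurable
  have hsupp : (Measure.map X (ℙ : Measure Ω)) (Set.Iio 0) = 0 := map_Iio_zero hm hpos
  refine ⟨((measurable_quantile_cdf hsupp).aestronglyMeasurable).restrict, ?_⟩
  rw [hasFiniteIntegral_iff_ofReal
    (Filter.Eventually.of_forall fun τ => quantile_cdf_nonneg hsupp τ)]
  calc ∫⁻ τ in Set.Ioc 0 u, ENNReal.ofReal (quantile (cdf (Measure.map X ℙ)) τ)
      ≤ ∫⁻ τ in Set.Ioc 0 1, ENNReal.ofReal (quantile (cdf (Measure.map X ℙ)) τ) :=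
        lintegral_mono_set (Set.Ioc_subset_Ioc_right hu)
    _ = ∫⁻ ω, ENNReal.ofReal (X ω) ∂(ℙ : Measure Ω) := C4 hm hpos
    _ < ⊤ := by
        rw [← hasFiniteIntegral_iff_ofReal (Filter.Eventually.of_forall hpos)]
        exact h₁.hasFiniteIntegral

lemma cdfOf_eq (hm : Measurable X) : cdfOf X = (cdf (Measure.map X ℙ) : ℝ → ℝ) := by
  have hmap : IsProbabilityMeasure (Measure.map X (ℙ : Measure Ω)) :=
    Measure.isProbabilityMeasure_map hm.aemeasurable
  funext x
  rw [cdfOf, cdf_eq_real, measureReal_def, Measure.map_apply hm measurableSet_Iic]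
  rfl

lemma lorenz_eq (hm : Measurable X) {u : ℝ} (hu : 0 ≤ u) :
    lorenz X u = ∫ τ in Set.Ioc 0 u, quantile (cdf (Measure.map X ℙ)) τ := by
  rw [lorenz, cdfOf_eq hm, intervalIntegral.integral_of_le hu]

lemma lorenz_one (hm : Measurable X) (hpos : ∀ ω, 0 ≤ X ω)
    (h₁ : Integrable X (ℙ : Measure Ω)) :
    lorenz X 1 = ∫ ω, X ω := by
  have hmap : IsProbabilityMeasure (Measure.map X (ℙ : Measure Ω)) :=
    Measure.isProbabilityMeasure_map hm.aemeasurable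
  have hsupp : (Measure.map X (ℙ : Measure Ω)) (Set.Iio 0) = 0 := map_Iio_zero hm hpos
  rw [lorenz_eq hm zero_le_one]
  rw [integral_eq_lintegral_of_nonneg_ae
    (Filter.Eventually.of_forall fun τ => quantile_cdf_nonneg hsupp τ)
    ((measurable_quantile_cdf hsupp).aestronglyMeasurable).restrict]
  rw [integral_eq_lintegral_of_nonneg_ae (Filter.Eventually.of_forall hpos)
    hm.aestronglyMeasurable]
  rw [C4 hm hpos]

end LorenzAux

open LorenzAux Set
open scoped ENNReal

/-- Converse part of Theorem 1: if `X₂` arises from `X₁` by a fair gamble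
(`E[X₂|X₁] = X₁` a.s.) and both are nonnegative with mean one, then the
Lorenz curves satisfy `L₁(u) ≥ L₂(u)` for all `u ∈ [0,1]`. -/
theorem lorenz_decreases_of_fair_gamble {Ω : Type*} [MeasureSpace Ω]
    [IsProbabilityMeasure (ℙ : Measure Ω)]
    (X₁ X₂ : Ω → ℝ) (hm₁ : Measurable X₁) (hm₂ : Measurable X₂)
    (h₁ : Integrable X₁) (h₂ : Integrable X₂)
    (hpos₁ : ∀ ω, 0 ≤ X₁ ω) (hpos₂ : ∀ ω, 0 ≤ X₂ ω)
    (hmean₁ : ∫ ω, X₁ ω = 1) (hmean₂ : ∫ ω, X₂ ω = 1)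
    (hmart : (ℙ : Measure Ω)[X₂ | MeasurableSpace.comap X₁ (borel ℝ)] =ᵐ[ℙ] X₁) :
    ∀ u ∈ Set.Icc (0:ℝ) 1, lorenz X₂ u ≤ lorenz X₁ u := by
  intro u hu
  obtain ⟨hu0, hu1⟩ := hu
  -- trivial case u = 0
  rcases eq_or_lt_of_le hu0 with h0 | hu0
  · rw [lorenz, lorenz, ← h0, intervalIntegral.integral_same, intervalIntegral.integral_same]
  -- case u = 1
  rcases eq_or_lt_of_le hu1 with h1 | hu1
  · rw [h1, lorenz_one hm₂ hpos₂ h₂, lorenz_one hm₁ hpos₁ h₁, hmean₁, hmean₂]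
  -- main case 0 < u < 1
  have hmap₁ : IsProbabilityMeasure (Measure.map X₁ (ℙ : Measure Ω)) :=
    Measure.isProbabilityMeasure_map hm₁.aemeasurable
  have hmap₂ : IsProbabilityMeasure (Measure.map X₂ (ℙ : Measure Ω)) :=
    Measure.isProbabilityMeasure_map hm₂.aemeasurable
  have hsupp₁ : (Measure.map X₁ (ℙ : Measure Ω)) (Set.Iio 0) = 0 := map_Iio_zero hm₁ hpos₁
  have hsupp₂ : (Measure.map X₂ (ℙ : Measure Ω)) (Set.Iio 0) = 0 := map_Iio_zero hm₂ hpos₂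
  set Q₁ : ℝ → ℝ := quantile (cdf (Measure.map X₁ ℙ)) with hQ₁
  set Q₂ : ℝ → ℝ := quantile (cdf (Measure.map X₂ ℙ)) with hQ₂
  set c : ℝ := Q₂ u with hc_def
  have hc : 0 ≤ c := quantile_cdf_nonneg hsupp₂ u
  -- integrabilities
  have hQint₁ : IntegrableOn Q₁ (Set.Ioc 0 u) volume :=
    integrableOn_quantile hm₁ hpos₁ h₁ hu1.le
  have hQint₂ : IntegrableOn Q₂ (Set.Ioc 0 u) volume :=
    integrableOn_quantile hm₂ hpos₂ h₂ hu1.le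
  have hconst : IntegrableOn (fun _ : ℝ => c) (Set.Ioc 0 u) volume :=
    integrableOn_const measure_Ioc_lt_top.ne
  -- Q₂ τ ≤ c on Ioc 0 u
  have hQle : ∀ τ ∈ Set.Ioc 0 u, Q₂ τ ≤ c := fun τ hτ =>
    quantile_le_of_le_cdf hsupp₂ hτ.1 (le_trans hτ.2 (le_cdf_quantile hu1))
  -- Jensen step in Bochner form
  have hm_le : MeasurableSpace.comap X₁ (borel ℝ) ≤
      (MeasureSpace.toMeasurableSpace : MeasurableSpace Ω) := by
    rw [← BorelSpace.measurable_eq (α := ℝ)]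
    exact hm₁.comap_le
  have hjensen : ∫ ω, max (c - X₁ ω) 0 ≤ ∫ ω, max (c - X₂ ω) 0 :=
    jensen_pos_part hm_le X₁ X₂ h₁ h₂ hmart c
  have hf_int : Integrable (fun ω => max (c - X₁ ω) 0) (ℙ : Measure Ω) :=
    ((integrable_const c).sub h₁).pos_part
  have hg_int : Integrable (fun ω => max (c - X₂ ω) 0) (ℙ : Measure Ω) :=
    ((integrable_const c).sub h₂).pos_part
  -- the ENNReal chain
  have key : ∫⁻ τ in Set.Ioc 0 u, ENNReal.ofReal (c - Q₁ τ) ≤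
      ∫⁻ τ in Set.Ioc 0 u, ENNReal.ofReal (c - Q₂ τ) := by
    calc ∫⁻ τ in Set.Ioc 0 u, ENNReal.ofReal (c - Q₁ τ)
        ≤ ∫⁻ t in Set.Ioc 0 c, ENNReal.ofReal (cdf (Measure.map X₁ ℙ) t) :=
          C1 hsupp₁ hu0 hu1.le
      _ = ∫⁻ ω, ENNReal.ofReal (max (c - X₁ ω) 0) ∂(ℙ : Measure Ω) :=
          (C3 hm₁ hpos₁ c).symm
      _ ≤ ∫⁻ ω, ENNReal.ofReal (max (c - X₂ ω) 0) ∂(ℙ : Measure Ω) := by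
          rw [← ofReal_integral_eq_lintegral_ofReal hf_int
            (Filter.Eventually.of_forall fun ω => le_max_right _ _),
            ← ofReal_integral_eq_lintegral_ofReal hg_int
            (Filter.Eventually.of_forall fun ω => le_max_right _ _)]
          exact ENNReal.ofReal_le_ofReal hjensen
      _ = ∫⁻ t in Set.Ioc 0 c, ENNReal.ofReal (cdf (Measure.map X₂ ℙ) t) :=
          C3 hm₂ hpos₂ c
      _ = ∫⁻ τ in Set.Ioc 0 u, ENNReal.ofReal (c - Q₂ τ) := C2 hsupp₂ hu0 hu1
  -- convert to real integrals
  have hnn₂ : 0 ≤ᵐ[volume.restrict (Set.Ioc 0 u)] fun τ => c - Q₂ τ := by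
    filter_upwards [ae_restrict_mem measurableSet_Ioc] with τ hτ
    exact sub_nonneg.mpr (hQle τ hτ)
  have hint₂ : IntegrableOn (fun τ => c - Q₂ τ) (Set.Ioc 0 u) volume := hconst.sub hQint₂
  have hA : ENNReal.ofReal (∫ τ in Set.Ioc 0 u, (c - Q₂ τ)) =
      ∫⁻ τ in Set.Ioc 0 u, ENNReal.ofReal (c - Q₂ τ) :=
    ofReal_integral_eq_lintegral_ofReal hint₂ hnn₂
  have hint₁ : IntegrableOn (fun τ => c - Q₁ τ) (Set.Ioc 0 u) volume := hconst.sub hQint₁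
  have hB : ∫ τ in Set.Ioc 0 u, (c - Q₁ τ) ≤
      (∫⁻ τ in Set.Ioc 0 u, ENNReal.ofReal (c - Q₁ τ)).toReal := by
    have h1 : ∫ τ in Set.Ioc 0 u, (c - Q₁ τ) ≤
        ∫ τ in Set.Ioc 0 u, max (c - Q₁ τ) 0 :=
      integral_mono hint₁ hint₁.pos_part (fun τ => le_max_left _ _)
    have h2 : ∫ τ in Set.Ioc 0 u, max (c - Q₁ τ) 0 =
        (∫⁻ τ in Set.Ioc 0 u, ENNReal.ofReal (c - Q₁ τ)).toReal := by
      have h2' := integral_eq_lintegral_of_nonneg_ae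
        (μ := volume.restrict (Set.Ioc 0 u)) (f := fun τ => max (c - Q₁ τ) 0)
        (Filter.Eventually.of_forall fun τ => le_max_right _ _)
        hint₁.pos_part.aestronglyMeasurable
      rw [h2']
      congr 1
      exact lintegral_congr fun τ => ofReal_max_zero _
    linarith
  have hfin : (∫⁻ τ in Set.Ioc 0 u, ENNReal.ofReal (c - Q₂ τ)) ≠ ⊤ := by
    rw [← hA]; exact ENNReal.ofReal_ne_top
  have hA_nonneg : 0 ≤ ∫ τ in Set.Ioc 0 u, (c - Q₂ τ) :=
    integral_nonneg_of_ae hnn₂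
  have hchain : ∫ τ in Set.Ioc 0 u, (c - Q₁ τ) ≤ ∫ τ in Set.Ioc 0 u, (c - Q₂ τ) := by
    calc ∫ τ in Set.Ioc 0 u, (c - Q₁ τ)
        ≤ (∫⁻ τ in Set.Ioc 0 u, ENNReal.ofReal (c - Q₁ τ)).toReal := hB
      _ ≤ (∫⁻ τ in Set.Ioc 0 u, ENNReal.ofReal (c - Q₂ τ)).toReal :=
          ENNReal.toReal_mono hfin key
      _ = ∫ τ in Set.Ioc 0 u, (c - Q₂ τ) := by rw [← hA, ENNReal.toReal_ofReal hA_nonneg]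
  have hs₁ : ∫ τ in Set.Ioc 0 u, (c - Q₁ τ) =
      (∫ τ in Set.Ioc 0 u, (c : ℝ)) - ∫ τ in Set.Ioc 0 u, Q₁ τ := integral_sub hconst hQint₁
  have hs₂ : ∫ τ in Set.Ioc 0 u, (c - Q₂ τ) =
      (∫ τ in Set.Ioc 0 u, (c : ℝ)) - ∫ τ in Set.Ioc 0 u, Q₂ τ := integral_sub hconst hQint₂
  rw [hs₁, hs₂] at hchain
  rw [lorenz_eq hm₁ hu0.le, lorenz_eq hm₂ hu0.le]
  linarith
end

section
/- Let X be a discrete random variable taking finitely many values x₁ < x₂ < ... < xₙ with probabilities p₁,...,pₙ, where x₁ ≥ 0 and E[X] = c > 0. Then there exists a discrete-time martingale (M_k) with M₀ = c almost surely, each step of which is a binary fair gamble (conditionally on the past, M_{k+1} takes at most two values with conditional mean M_k), such that M_{n-1} has the same distribution as X. -/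
open MeasureTheory ProbabilityTheory
open scoped ProbabilityTheory

/-- Lemma 1 of the paper: any finitely supported nonnegative distribution with
mean `c > 0` can be reached from constant wealth `c` by a finite sequence of
binary fair gambles.  Formally: there is a probability space and a process
`M` with `M 0 = c` a.s., such that each step is a martingale step
(`E[M (k+1) | σ(M 0, …, M k)] = M k` a.s.) in which, given the current wealth,
the next wealth takes at most two values, and `M (n-1)` is distributed as the
target distribution. -/
theorem exists_binary_martingale_to_target (n : ℕ) (hn : 0 < n)
    (x p : Fin n → ℝ) (hx : StrictMono x) (hx0 : 0 ≤ x ⟨0, hn⟩)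
    (hp : ∀ i, 0 < p i) (hsum : ∑ i, p i = 1)
    (c : ℝ) (hc : 0 < c) (hmean : ∑ i, p i * x i = c) :
    ∃ (Ω : Type) (_ : MeasureSpace Ω) (_ : IsProbabilityMeasure (ℙ : Measure Ω))
      (M : ℕ → Ω → ℝ),
      (∀ k, Measurable (M k)) ∧
      (∀ ω, M 0 ω = c) ∧
      -- each step is a fair gamble:
      (∀ k, (ℙ : Measure Ω)[M (k + 1) |
          ⨆ j ∈ Finset.range (k + 1), MeasurableSpace.comap (M j) (borel ℝ)]
          =ᵐ[ℙ] M k) ∧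
      -- each step is binary: given the current wealth, at most two outcomes
      (∀ k, ∃ f g : ℝ → ℝ, ∀ ω, M (k + 1) ω = f (M k ω) ∨ M (k + 1) ω = g (M k ω)) ∧
      -- the final wealth has the target distribution
      (∀ i, (ℙ {ω | M (n - 1) ω = x i}).toReal = p i) := by
  classical
  -- the measure
  set μ : Measure (Fin n) := ∑ i, ENNReal.ofReal (p i) • Measure.dirac i with hμdef
  have hμsingle : ∀ j : Fin n, μ {j} = ENNReal.ofReal (p j) := by
    intro j
    simp only [hμdef, Measure.coe_finset_sum, Finset.sum_apply, Measure.smul_apply,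
      Measure.dirac_apply' _ (measurableSet_singleton j), smul_eq_mul]
    rw [Finset.sum_eq_single j]
    · simp
    · intro i _ hij
      simp [Set.indicator_of_notMem, hij]
    · simp
  have hμprob : IsProbabilityMeasure μ := by
    constructor
    simp only [hμdef, Measure.coe_finset_sum, Finset.sum_apply, Measure.smul_apply,
      Measure.dirac_apply' _ MeasurableSet.univ, smul_eq_mul]
    simp only [Set.indicator_univ, Pi.one_apply, mul_one]
    rw [← ENNReal.ofReal_sum_of_nonneg (fun i _ => (hp i).le), hsum, ENNReal.ofReal_one]
  haveI := hμprob
  -- set integrals are finite sums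
  have hint : ∀ (s : Set (Fin n)) (f : Fin n → ℝ),
      ∫ ω in s, f ω ∂μ = ∑ i ∈ Finset.univ.filter (· ∈ s), p i * f i := by
    intro s f
    rw [integral_fintype (Integrable.of_finite), Finset.sum_filter]
    refine Finset.sum_congr rfl fun i _ => ?_
    rw [Measure.real, Measure.restrict_apply (measurableSet_singleton i)]
    by_cases hi : i ∈ s
    · rw [if_pos hi, Set.inter_eq_self_of_subset_left (by simpa using hi), hμsingle,
        ENNReal.toReal_ofReal (hp i).le, smul_eq_mul]
    · rw [if_neg hi, Set.singleton_inter_eq_empty.2 hi]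
      simp
  -- tail means
  set P : ℕ → ℝ := fun k => ∑ i ∈ Finset.univ.filter (fun i : Fin n => k ≤ i.val), p i with hPdef
  set S : ℕ → ℝ := fun k => ∑ i ∈ Finset.univ.filter (fun i : Fin n => k ≤ i.val), p i * x i
    with hSdef
  set t : ℕ → ℝ := fun k => S k / P k with htdef
  set M : ℕ → Fin n → ℝ := fun k ω => if ω.val < k then x ω else t k with hMdef
  have hempty : ∀ k, n ≤ k →
      Finset.univ.filter (fun i : Fin n => k ≤ i.val) = (∅ : Finset (Fin n)) := by
    intro k hk
    ext i
    simp only [Finset.mem_filter, Finset.mem_univ, true_and, Finset.notMem_empty, iff_false]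
    omega
  have hPpos : ∀ k, k < n → 0 < P k := by
    intro k hk
    refine Finset.sum_pos (fun i _ => hp i) ⟨⟨k, hk⟩, by simp⟩
  have hPt : ∀ k, P k * t k = S k := by
    intro k
    by_cases hk : k < n
    · rw [htdef, mul_comm, div_mul_cancel₀ _ (hPpos k hk).ne']
    · rw [htdef, hPdef, hSdef]
      simp only [hempty k (not_lt.1 hk), Finset.sum_empty, zero_mul, mul_zero]
  have hfilter_insert : ∀ (k : ℕ) (hk : k < n),
      Finset.univ.filter (fun i : Fin n => k ≤ i.val)
        = insert ⟨k, hk⟩ (Finset.univ.filter (fun i : Fin n => k + 1 ≤ i.val)) := by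
    intro k hk
    ext i
    simp only [Finset.mem_filter, Finset.mem_univ, true_and, Finset.mem_insert, Fin.ext_iff]
    omega
  have hrecS : ∀ (k : ℕ) (hk : k < n), S k = p ⟨k, hk⟩ * x ⟨k, hk⟩ + S (k + 1) := by
    intro k hk
    rw [hSdef]
    simp only
    rw [hfilter_insert k hk, Finset.sum_insert (by simp)]
  have hxkt : ∀ (k : ℕ) (hk : k < n), x ⟨k, hk⟩ ≤ t k := by
    intro k hk
    have h1 : P k * x ⟨k, hk⟩ ≤ S k := by
      rw [hPdef, hSdef, Finset.sum_mul]
      refine Finset.sum_le_sum fun i hi => ?_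
      have : (⟨k, hk⟩ : Fin n) ≤ i := by
        simp only [Finset.mem_filter] at hi
        exact hi.2
      exact mul_le_mul_of_nonneg_left (hx.monotone this) (hp i).le
    rw [htdef]
    rw [le_div_iff₀ (hPpos k hk)]
    linarith
  have hxlt : ∀ (j : Fin n) (k : ℕ), j.val < k → k < n → x j < t k := by
    intro j k hj hk
    exact lt_of_lt_of_le (hx (show j < ⟨k, hk⟩ from hj)) (hxkt k hk)
  have hM0 : ∀ ω, M 0 ω = c := by
    intro ω
    rw [hMdef]
    simp only [Nat.not_lt_zero, if_false]
    rw [htdef, hSdef, hPdef]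
    simp only [Nat.zero_le, Finset.filter_true_of_mem (fun i _ => Nat.zero_le _),
      Finset.filter_true]
    rw [hmean, hsum, div_one]
  -- the last step equals x
  have hlast : ∀ ω, M (n - 1) ω = x ω := by
    intro ω
    rw [hMdef]
    simp only
    by_cases hω : ω.val < n - 1
    · rw [if_pos hω]
    · rw [if_neg hω]
      have hn1 : n - 1 < n := by omega
      have hωeq : ω = ⟨n - 1, hn1⟩ := by
        apply Fin.ext
        have := ω.isLt
        simp only
        omega
      have hsingle : Finset.univ.filter (fun i : Fin n => n - 1 ≤ i.val)
          = {(⟨n - 1, hn1⟩ : Fin n)} := by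
        ext i
        simp only [Finset.mem_filter, Finset.mem_univ, true_and, Finset.mem_singleton,
          Fin.ext_iff]
        have := i.isLt
        omega
      rw [htdef, hSdef, hPdef]
      simp only [hsingle, Finset.sum_singleton]
      rw [hωeq, mul_comm, mul_div_assoc, div_self (hp _).ne', mul_one]
  -- measurability over the trivial sigma-algebra on Fin n
  have hmeas : ∀ k, Measurable (M k) := fun k => measurable_of_countable _
  -- package
  letI mΩ : MeasureSpace (Fin n) := ⟨μ⟩
  haveI : MeasurableSingletonClass (Fin n) := Fin.instMeasurableSingletonClass n
  have hPvol : (ℙ : Measure (Fin n)) = μ := rfl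
  refine ⟨Fin n, mΩ, hμprob, M, hmeas, hM0, ?_, ?_, ?_⟩
  · -- martingale property
    intro k
    rw [hPvol]
    set G : MeasurableSpace (Fin n) :=
      ⨆ j ∈ Finset.range (k + 1), MeasurableSpace.comap (M j) (borel ℝ) with hGdef
    set g : Fin n → ℕ := fun ω => min ω.val k with hgdef
    letI : MeasurableSpace (Fin n) := Fin.instMeasurableSpace n
    have hGmk : G ≤ MeasurableSpace.comap g ⊤ := by
      rw [hGdef]
      refine iSup_le fun j => iSup_le fun hj => ?_
      have hjk : j ≤ k := Nat.lt_succ_iff.1 (Finset.mem_range.1 hj)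
      have hcomp : M j = (fun m : ℕ =>
          if h : m < j ∧ m < n then x ⟨m, h.2⟩ else t j) ∘ g := by
        funext ω
        rw [hMdef, hgdef]
        simp only [Function.comp_apply]
        by_cases hω : ω.val < j
        · rw [if_pos hω, min_eq_left (le_trans hω.le hjk)]
          rw [dif_pos ⟨hω, ω.isLt⟩]
        · rw [if_neg hω]
          have : ¬ (min ω.val k < j ∧ min ω.val k < n) := by
            rintro ⟨h1, -⟩
            omega
          rw [dif_neg this]
      rw [hcomp, ← MeasurableSpace.comap_comp]
      exact MeasurableSpace.comap_mono le_top
    have hGle : G ≤ (Fin.instMeasurableSpace n : MeasurableSpace (Fin n)) := le_top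
    have hint1 : Integrable (M (k + 1)) μ := Integrable.of_finite (μ := μ)
    have hint2 : ∀ s : Set (Fin n), MeasurableSet[G] s → μ s < ⊤ → IntegrableOn (M k) s μ :=
      fun s _ _ => Integrable.integrableOn (Integrable.of_finite (μ := μ))
    refine (ae_eq_condExp_of_forall_setIntegral_eq hGle hint1 hint2 ?_ ?_).symm
    · -- set integral equality
      intro s hs _
      obtain ⟨u, -, rfl⟩ := hGmk s hs
      rw [hint, hint]
      rw [← sub_eq_zero, ← Finset.sum_sub_distrib]
      have hzero : ∀ i : Fin n, i.val < k → p i * M k i - p i * M (k + 1) i = 0 := by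
        intro i hi
        rw [hMdef]
        simp only [if_pos hi, if_pos (Nat.lt_succ_of_lt hi), sub_self]
      rw [← Finset.sum_filter_of_ne (p := fun i : Fin n => k ≤ i.val)
        (fun i _ hne => not_lt.1 fun hlt => hne (hzero i hlt))]
      by_cases hk' : k ∈ u
      · have hfeq : (Finset.univ.filter (fun i : Fin n => i ∈ g ⁻¹' u)).filter
            (fun i : Fin n => k ≤ i.val)
            = Finset.univ.filter (fun i : Fin n => k ≤ i.val) := by
          ext i
          simp only [Finset.mem_filter, Finset.mem_univ, true_and, hgdef, Set.mem_preimage]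
          constructor
          · rintro ⟨-, h⟩; exact h
          · intro h; exact ⟨by rwa [min_eq_right h], h⟩
        rw [hfeq, Finset.sum_sub_distrib]
        have hB : ∑ i ∈ Finset.univ.filter (fun i : Fin n => k ≤ i.val), p i * M k i
            = S k := by
          rw [← hPt k, hPdef, Finset.sum_mul]
          refine Finset.sum_congr rfl fun i hi => ?_
          simp only [Finset.mem_filter, Finset.mem_univ, true_and] at hi
          rw [hMdef]
          simp only [if_neg (not_lt.2 hi)]
        have hA : ∑ i ∈ Finset.univ.filter (fun i : Fin n => k ≤ i.val), p i * M (k + 1) i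
            = S k := by
          by_cases hkn : k < n
          · rw [hfilter_insert k hkn, Finset.sum_insert (by simp)]
            have h1 : M (k + 1) ⟨k, hkn⟩ = x ⟨k, hkn⟩ := by
              rw [hMdef]; simp
            have h2 : ∑ i ∈ Finset.univ.filter (fun i : Fin n => k + 1 ≤ i.val),
                p i * M (k + 1) i = S (k + 1) := by
              rw [← hPt (k + 1), hPdef, Finset.sum_mul]
              refine Finset.sum_congr rfl fun i hi => ?_
              simp only [Finset.mem_filter, Finset.mem_univ, true_and] at hi
              rw [hMdef]
              simp only [if_neg (not_lt.2 hi)]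
            rw [h1, h2, ← hrecS k hkn]
          · rw [hempty k (not_lt.1 hkn), Finset.sum_empty, hSdef]
            simp only [hempty k (not_lt.1 hkn), Finset.sum_empty]
        rw [hB, hA, sub_self]
      · have hfeq : (Finset.univ.filter (fun i : Fin n => i ∈ g ⁻¹' u)).filter
            (fun i : Fin n => k ≤ i.val) = (∅ : Finset (Fin n)) := by
          ext i
          simp only [Finset.mem_filter, Finset.mem_univ, true_and, hgdef, Set.mem_preimage,
            Finset.notMem_empty, iff_false, not_and]
          intro hmem hki
          rw [min_eq_right hki] at hmem
          exact hk' hmem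
        rw [hfeq, Finset.sum_empty]
    · -- M k is G-strongly measurable
      have hle : MeasurableSpace.comap (M k) (borel ℝ) ≤ G := by
        rw [hGdef]
        exact le_iSup₂ (f := fun (j : ℕ) (_ : j ∈ Finset.range (k + 1)) =>
          MeasurableSpace.comap (M j) (borel ℝ)) k (Finset.self_mem_range_succ k)
      have : Measurable[G] (M k) := fun s hs =>
        hle _ ⟨s, hs, rfl⟩
      exact StronglyMeasurable.aestronglyMeasurable (this.stronglyMeasurable)
  · -- binary steps
    intro k
    refine ⟨fun m => if h : k < n then (if m = t k then x ⟨k, h⟩ else m) else m,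
      fun m => if m = t k then t (k + 1) else m, fun ω => ?_⟩
    by_cases hω : ω.val < k
    · left
      have hMk : M k ω = x ω := by rw [hMdef]; simp [hω]
      have hMk1 : M (k + 1) ω = x ω := by rw [hMdef]; simp [Nat.lt_succ_of_lt hω]
      rw [hMk, hMk1]
      by_cases hkn : k < n
      · simp [hkn, (hxlt ω k hω hkn).ne]
      · simp [hkn]
    · have hMk : M k ω = t k := by rw [hMdef]; simp [hω]
      by_cases hω1 : ω.val < k + 1
      · left
        have hωk : ω.val = k := by omega
        have hkn : k < n := hωk ▸ ω.isLt
        have hMk1 : M (k + 1) ω = x ω := by rw [hMdef]; simp [hω1]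
        rw [hMk, hMk1, show ω = ⟨k, hkn⟩ from Fin.ext hωk]
        simp [hkn]
      · right
        have hMk1 : M (k + 1) ω = t (k + 1) := by rw [hMdef]; simp [hω1]
        rw [hMk, hMk1]
        simp
  · -- final distribution
    intro i
    have hset : {ω : Fin n | M (n - 1) ω = x i} = {i} := by
      ext ω
      simp only [Set.mem_setOf_eq, hlast, Set.mem_singleton_iff]
      exact ⟨fun h => hx.injective h, fun h => h ▸ rfl⟩
    show (μ _).toReal = p i
    rw [hset, hμsingle, ENNReal.toReal_ofReal (hp i).le]
end

section
/- Let (Xₙ) be a nonnegative martingale with E[Xₙ] = 1 for all n, and let Lₙ be the Lorenz curve of Xₙ. Then for each u ∈ [0,1], the sequence Lₙ(u) is nonincreasing in n. -/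
open MeasureTheory ProbabilityTheory
open scoped ProbabilityTheory ENNReal
set_option linter.unusedSectionVars false

section Basic
variable {Ω : Type*} [MeasureSpace Ω] [IsProbabilityMeasure (ℙ : Measure Ω)]
  (X : Ω → ℝ) (hm : Measurable X) (hpos : ∀ ω, 0 ≤ X ω)

lemma cdfOf_mono : Monotone (cdfOf X) := by
  intro a b hab
  exact ENNReal.toReal_mono (measure_ne_top _ _)
    (measure_mono (fun ω (h : X ω ≤ a) => h.trans hab))

lemma cdfOf_nonneg (x : ℝ) : 0 ≤ cdfOf X x := ENNReal.toReal_nonneg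

lemma cdfOf_le_one (x : ℝ) : cdfOf X x ≤ 1 := by
  rw [cdfOf, show (1:ℝ) = (1 : ℝ≥0∞).toReal by simp]
  exact ENNReal.toReal_mono (by simp) (by simpa using prob_le_one)

lemma cdfOf_ofReal (x : ℝ) : ENNReal.ofReal (cdfOf X x) = ℙ {ω | X ω ≤ x} :=
  ENNReal.ofReal_toReal (measure_ne_top _ _)

include hpos in
lemma cdfOf_neg {x : ℝ} (hx : x < 0) : cdfOf X x = 0 := by
  have : {ω | X ω ≤ x} = ∅ := by
    ext ω; simp only [Set.mem_setOf_eq, Set.mem_empty_iff_false, iff_false, not_le]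
    exact hx.trans_le (hpos ω)
  simp [cdfOf, this]

lemma cdfOf_measurable : Measurable (cdfOf X) := (cdfOf_mono X).measurable

include hm in
lemma cdfOf_tendsto_one :
    Filter.Tendsto (fun n : ℕ => cdfOf X n) Filter.atTop (nhds 1) := by
  have h1 : (⋃ n : ℕ, {ω | X ω ≤ (n:ℝ)}) = Set.univ := by
    ext ω
    simp only [Set.mem_iUnion, Set.mem_setOf_eq, Set.mem_univ, iff_true]
    obtain ⟨n, hn⟩ := exists_nat_ge (X ω)
    exact ⟨n, hn⟩
  have h2 : Filter.Tendsto (fun n : ℕ => (ℙ {ω | X ω ≤ (n:ℝ)}))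
      Filter.atTop (nhds (ℙ (Set.univ : Set Ω))) := by
    have := tendsto_measure_iUnion_atTop (μ := (ℙ : Measure Ω))
      (s := fun n : ℕ => {ω | X ω ≤ (n:ℝ)})
      (fun a b hab ω (h : X ω ≤ (a:ℝ)) => h.trans (by exact_mod_cast hab))
    rwa [h1] at this
  have h3 := (ENNReal.tendsto_toReal (measure_ne_top ℙ Set.univ)).comp h2
  simpa [cdfOf, Function.comp_def] using h3

include hm in
lemma quantile_set_nonempty {u : ℝ} (hu : u < 1) : {x : ℝ | u ≤ cdfOf X x}.Nonempty := by
  have := (cdfOf_tendsto_one X hm).eventually_const_le hu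
  obtain ⟨n, hn⟩ := this.exists
  exact ⟨n, hn⟩

include hpos in
lemma quantile_set_subset {u : ℝ} (hu : 0 < u) :
    {x : ℝ | u ≤ cdfOf X x} ⊆ Set.Ici 0 := by
  intro x hx
  by_contra h
  rw [Set.mem_Ici, not_le] at h
  rw [Set.mem_setOf_eq, cdfOf_neg X hpos h] at hx
  exact absurd (hu.trans_le hx) (lt_irrefl 0)

include hpos in
lemma quantile_nonneg {u : ℝ} (hu : 0 < u) (hu1 : u < 1) (hm : Measurable X) :
    0 ≤ quantile (cdfOf X) u :=
  le_csInf (quantile_set_nonempty X hm hu1) (quantile_set_subset X hpos hu)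

include hpos in
lemma quantile_le {u s : ℝ} (hu : 0 < u) (h : u ≤ cdfOf X s) : quantile (cdfOf X) u ≤ s :=
  csInf_le ⟨0, quantile_set_subset X hpos hu⟩ h

include hpos in
lemma lt_of_lt_quantile {u s : ℝ} (hu : 0 < u) (h : s < quantile (cdfOf X) u) :
    cdfOf X s < u := by
  by_contra hc
  push_neg at hc
  exact absurd (quantile_le X hpos hu hc) (not_le.mpr h)

include hm in
lemma le_cdfOf_of_quantile_lt {u s : ℝ} (hu1 : u < 1) (h : quantile (cdfOf X) u < s) :
    u ≤ cdfOf X s := by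
  obtain ⟨x, hx, hxs⟩ := exists_lt_of_csInf_lt (quantile_set_nonempty X hm hu1) h
  exact hx.trans (cdfOf_mono X hxs.le)

include hm hpos in
lemma quantile_monotoneOn : MonotoneOn (quantile (cdfOf X)) (Set.Ioo 0 1) := by
  intro a ha b hb hab
  exact csInf_le_csInf ⟨0, quantile_set_subset X hpos ha.1⟩
    (quantile_set_nonempty X hm hb.2)
    (fun x hx => le_trans hab hx)

end Basic

section Fubini
variable {Ω : Type*} [MeasureSpace Ω] [IsProbabilityMeasure (ℙ : Measure Ω)]
  (X : Ω → ℝ) (hm : Measurable X) (hpos : ∀ ω, 0 ≤ X ω)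

/-- generic double counting -/
lemma double_count {α β : Type*} [MeasurableSpace α] [MeasurableSpace β]
    (μ : Measure α) (ν : Measure β) [SigmaFinite μ] [SigmaFinite ν]
    {A : Set (α × β)} (hA : MeasurableSet A) :
    ∫⁻ a, ν {b | (a, b) ∈ A} ∂μ = ∫⁻ b, μ {a | (a, b) ∈ A} ∂ν := by
  have h1 := Measure.prod_apply (μ := μ) (ν := ν) hA
  have h2 := Measure.prod_apply_symm (μ := μ) (ν := ν) hA
  rw [h1] at h2
  exact h2

include hm hpos in
/-- Fubini identity for the quantile integral (L3). -/
lemma lintegral_quantile_eq {u : ℝ} (hu : 0 < u) (hu1 : u ≤ 1) :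
    ∫⁻ τ in Set.Ioo 0 u, ENNReal.ofReal (quantile (cdfOf X) τ)
      = ∫⁻ s in Set.Ici 0, ENNReal.ofReal (u - cdfOf X s) := by
  set F := cdfOf X with hF
  set G := quantile (cdfOf X) with hG
  set A : Set (ℝ × ℝ) := {p | (0 < p.1 ∧ p.1 < u) ∧ (0 ≤ p.2 ∧ F p.2 < p.1)} with hA
  have hAm : MeasurableSet A := by
    exact (((measurableSet_lt measurable_const measurable_fst).inter
        (measurableSet_lt measurable_fst measurable_const)).inter
      ((measurableSet_le measurable_const measurable_snd).inter
        (measurableSet_lt ((cdfOf_measurable X).comp measurable_snd) measurable_fst)))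
  have key := double_count volume volume hAm
  have lhs : ∫⁻ τ, volume {s | (τ, s) ∈ A} = ∫⁻ τ in Set.Ioo 0 u, ENNReal.ofReal (G τ) := by
    rw [← lintegral_indicator measurableSet_Ioo]
    apply lintegral_congr
    intro τ
    by_cases hτ : τ ∈ Set.Ioo 0 u
    · rw [Set.indicator_of_mem hτ]
      have hτ1 : τ < 1 := lt_of_lt_of_le hτ.2 hu1
      have h1 : Set.Ico 0 (G τ) ⊆ {s | (τ, s) ∈ A} := by
        intro s hs
        exact ⟨⟨hτ.1, hτ.2⟩, hs.1, lt_of_lt_quantile X hpos hτ.1 hs.2⟩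
      have h2 : {s | (τ, s) ∈ A} ⊆ Set.Icc 0 (G τ) := by
        intro s hs
        refine ⟨hs.2.1, ?_⟩
        by_contra hc
        push_neg at hc
        exact absurd (le_cdfOf_of_quantile_lt X hm hτ1 hc) (not_le.mpr hs.2.2)
      have hGpos : 0 ≤ G τ := quantile_nonneg X hpos hτ.1 hτ1 hm
      refine le_antisymm ?_ ?_
      · calc volume {s | (τ, s) ∈ A} ≤ volume (Set.Icc 0 (G τ)) := measure_mono h2
          _ = ENNReal.ofReal (G τ) := by rw [Real.volume_Icc, sub_zero]
      · calc ENNReal.ofReal (G τ) = volume (Set.Ico 0 (G τ)) := by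
              rw [Real.volume_Ico, sub_zero]
          _ ≤ volume {s | (τ, s) ∈ A} := measure_mono h1
    · rw [Set.indicator_of_notMem hτ]
      convert measure_empty (μ := (volume : Measure ℝ))
      ext s
      simp only [Set.mem_setOf_eq, Set.mem_empty_iff_false, iff_false]
      rintro ⟨⟨h1, h2⟩, -⟩
      exact hτ ⟨h1, h2⟩
  have rhs : ∫⁻ s, volume {τ | (τ, s) ∈ A} = ∫⁻ s in Set.Ici 0, ENNReal.ofReal (u - F s) := by
    rw [← lintegral_indicator measurableSet_Ici]
    apply lintegral_congr
    intro s
    by_cases hs : s ∈ Set.Ici 0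
    · rw [Set.indicator_of_mem hs]
      have : {τ | (τ, s) ∈ A} = Set.Ioo (F s) u := by
        ext τ
        simp only [Set.mem_setOf_eq, Set.mem_Ioo, hA]
        constructor
        · rintro ⟨⟨-, h2⟩, -, h4⟩; exact ⟨h4, h2⟩
        · rintro ⟨h1, h2⟩
          exact ⟨⟨lt_of_le_of_lt (cdfOf_nonneg X s) h1, h2⟩, hs, h1⟩
      rw [this, Real.volume_Ioo]
    · rw [Set.indicator_of_notMem hs]
      convert measure_empty (μ := (volume : Measure ℝ))
      ext τ
      simp only [Set.mem_setOf_eq, Set.mem_empty_iff_false, iff_false]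
      rintro ⟨-, h3, -⟩
      exact hs h3
  rw [← lhs, ← rhs]
  exact key

include hm hpos in
/-- Layer cake for E[(x - X)⁺] (L4b). -/
lemma lintegral_pospart_eq {x : ℝ} :
    ∫⁻ ω, ENNReal.ofReal (x - X ω) ∂ℙ
      = ∫⁻ s in Set.Ico 0 x, ENNReal.ofReal (cdfOf X s) := by
  set B : Set (Ω × ℝ) := {p | (0 ≤ p.2 ∧ p.2 < x) ∧ X p.1 ≤ p.2} with hB
  have hBm : MeasurableSet B :=
    (((measurableSet_le measurable_const measurable_snd).inter
        (measurableSet_lt measurable_snd measurable_const)).inter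
      (measurableSet_le (hm.comp measurable_fst) measurable_snd))
  have key := double_count ℙ volume hBm
  have lhs : ∫⁻ ω, volume {s | (ω, s) ∈ B} ∂ℙ = ∫⁻ ω, ENNReal.ofReal (x - X ω) ∂ℙ := by
    apply lintegral_congr
    intro ω
    have : {s | (ω, s) ∈ B} = Set.Ico (X ω) x := by
      ext s
      simp only [Set.mem_setOf_eq, Set.mem_Ico, hB]
      constructor
      · rintro ⟨⟨-, h2⟩, h3⟩; exact ⟨h3, h2⟩
      · rintro ⟨h1, h2⟩; exact ⟨⟨(hpos ω).trans h1, h2⟩, h1⟩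
    rw [this, Real.volume_Ico]
  have rhs : ∫⁻ s, (ℙ : Measure Ω) {ω | (ω, s) ∈ B}
      = ∫⁻ s in Set.Ico 0 x, ENNReal.ofReal (cdfOf X s) := by
    rw [← lintegral_indicator measurableSet_Ico]
    apply lintegral_congr
    intro s
    by_cases hs : s ∈ Set.Ico 0 x
    · rw [Set.indicator_of_mem hs]
      have hset : {ω | (ω, s) ∈ B} = {ω | X ω ≤ s} := by
        ext ω
        simp only [Set.mem_setOf_eq, hB]
        exact ⟨fun h => h.2, fun h => ⟨⟨hs.1, hs.2⟩, h⟩⟩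
      rw [hset, ← cdfOf_ofReal]
    · rw [Set.indicator_of_notMem hs]
      convert measure_empty (μ := (ℙ : Measure Ω))
      ext ω
      simp only [Set.mem_setOf_eq, Set.mem_empty_iff_false, iff_false]
      rintro ⟨h1, -⟩
      exact hs ⟨h1.1, h1.2⟩
  rw [← lhs, ← rhs]
  exact key

include hm hpos in
/-- Layer cake for E[X] (L4c). -/
lemma lintegral_self_eq :
    ∫⁻ ω, ENNReal.ofReal (X ω) ∂ℙ
      = ∫⁻ s in Set.Ici 0, ENNReal.ofReal (1 - cdfOf X s) := by
  set C : Set (Ω × ℝ) := {p | 0 ≤ p.2 ∧ p.2 < X p.1} with hC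
  have hCm : MeasurableSet C :=
    ((measurableSet_le measurable_const measurable_snd).inter
      (measurableSet_lt measurable_snd (hm.comp measurable_fst)))
  have key := double_count ℙ volume hCm
  have lhs : ∫⁻ ω, volume {s | (ω, s) ∈ C} ∂ℙ = ∫⁻ ω, ENNReal.ofReal (X ω) ∂ℙ := by
    apply lintegral_congr
    intro ω
    have : {s | (ω, s) ∈ C} = Set.Ico 0 (X ω) := by
      ext s; simp [hC, Set.mem_Ico]
    rw [this, Real.volume_Ico, sub_zero]
  have rhs : ∫⁻ s, (ℙ : Measure Ω) {ω | (ω, s) ∈ C}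
      = ∫⁻ s in Set.Ici 0, ENNReal.ofReal (1 - cdfOf X s) := by
    rw [← lintegral_indicator measurableSet_Ici]
    apply lintegral_congr
    intro s
    by_cases hs : s ∈ Set.Ici 0
    · rw [Set.indicator_of_mem hs]
      have hset : {ω | (ω, s) ∈ C} = {ω | X ω ≤ s}ᶜ := by
        ext ω
        simp only [Set.mem_setOf_eq, Set.mem_compl_iff, hC, not_le]
        exact ⟨fun h => h.2, fun h => ⟨hs, h⟩⟩
      rw [hset, measure_compl (show MeasurableSet {ω | X ω ≤ s} from hm measurableSet_Iic)
        (measure_ne_top _ _), measure_univ,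
        ENNReal.ofReal_sub _ (cdfOf_nonneg X s), ENNReal.ofReal_one, cdfOf_ofReal]
    · rw [Set.indicator_of_notMem hs]
      convert measure_empty (μ := (ℙ : Measure Ω))
      ext ω
      simp only [Set.mem_setOf_eq, Set.mem_empty_iff_false, iff_false]
      rintro ⟨h1, -⟩
      exact hs h1
  rw [← lhs, ← rhs]
  exact key

end Fubini

lemma ofReal_max0 (r : ℝ) : ENNReal.ofReal (max r 0) = ENNReal.ofReal r := by
  rcases le_total r 0 with h | h
  · rw [max_eq_right h, ENNReal.ofReal_zero, (ENNReal.ofReal_eq_zero).2 h]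
  · rw [max_eq_left h]

section Bridge
variable {Ω : Type*} [MeasureSpace Ω] [IsProbabilityMeasure (ℙ : Measure Ω)]
  (X : Ω → ℝ) (hm : Measurable X) (hpos : ∀ ω, 0 ≤ X ω)

include hm hpos in
lemma lorenz_eq {u : ℝ} (hu : 0 < u) (hu1 : u ≤ 1) :
    lorenz X u = ∫ s in Set.Ici (0:ℝ), max (u - cdfOf X s) 0 := by
  set F := cdfOf X
  set G := quantile (cdfOf X) with hG
  have step1 : lorenz X u = ∫ τ in Set.Ioo (0:ℝ) u, G τ := by
    rw [lorenz, intervalIntegral.integral_of_le hu.le, MeasureTheory.integral_Ioc_eq_integral_Ioo]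
  have hGnn : 0 ≤ᵐ[volume.restrict (Set.Ioo (0:ℝ) u)] G := by
    filter_upwards [ae_restrict_mem measurableSet_Ioo] with τ hτ
    exact quantile_nonneg X hpos hτ.1 (lt_of_lt_of_le hτ.2 hu1) hm
  have hGm : AEStronglyMeasurable G (volume.restrict (Set.Ioo (0:ℝ) u)) := by
    refine (aemeasurable_restrict_of_monotoneOn measurableSet_Ioo ?_).aestronglyMeasurable
    exact (quantile_monotoneOn X hm hpos).mono
      (Set.Ioo_subset_Ioo le_rfl hu1)
  have step2 : ∫ τ in Set.Ioo (0:ℝ) u, G τ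
      = (∫⁻ τ in Set.Ioo (0:ℝ) u, ENNReal.ofReal (G τ)).toReal :=
    integral_eq_lintegral_of_nonneg_ae hGnn hGm
  have step3 := lintegral_quantile_eq X hm hpos hu hu1
  have hmax : ∀ s : ℝ, ENNReal.ofReal (u - F s) = ENNReal.ofReal (max (u - F s) 0) :=
    fun s => (ofReal_max0 _).symm
  have step4 : (∫⁻ s in Set.Ici (0:ℝ), ENNReal.ofReal (u - F s)).toReal
      = ∫ s in Set.Ici (0:ℝ), max (u - F s) 0 := by
    rw [show (∫⁻ s in Set.Ici (0:ℝ), ENNReal.ofReal (u - F s))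
        = ∫⁻ s in Set.Ici (0:ℝ), ENNReal.ofReal (max (u - F s) 0) from
      lintegral_congr fun s => hmax s]
    exact (integral_eq_lintegral_of_nonneg_ae
      (ae_of_all _ fun s => le_max_right _ _)
      ((measurable_const.sub (cdfOf_measurable X)).max measurable_const).aestronglyMeasurable).symm
  rw [step1, step2, hG, step3, step4]

include hm hpos in
lemma integrableOn_cdf {x : ℝ} : IntegrableOn (fun s => cdfOf X s) (Set.Ico 0 x) := by
  refine ⟨(cdfOf_measurable X).aestronglyMeasurable, ?_⟩
  rw [hasFiniteIntegral_iff_ofReal (ae_of_all _ fun s => cdfOf_nonneg X s)]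
  calc ∫⁻ s in Set.Ico 0 x, ENNReal.ofReal (cdfOf X s)
      ≤ ∫⁻ _ in Set.Ico 0 x, 1 := by
        refine lintegral_mono fun s => ?_
        rw [show (1:ℝ≥0∞) = ENNReal.ofReal 1 by simp]
        exact ENNReal.ofReal_le_ofReal (cdfOf_le_one X s)
    _ = volume (Set.Ico 0 x) := by simp
    _ < ⊤ := by rw [Real.volume_Ico]; exact ENNReal.ofReal_lt_top

include hm hpos in
lemma integral_pospart (x : ℝ) :
    ∫ ω, max (x - X ω) 0 ∂ℙ = ∫ s in Set.Ico 0 x, cdfOf X s := by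
  have h1 : ∫ ω, max (x - X ω) 0 ∂ℙ
      = (∫⁻ ω, ENNReal.ofReal (max (x - X ω) 0) ∂ℙ).toReal :=
    integral_eq_lintegral_of_nonneg_ae (ae_of_all _ fun ω => le_max_right _ _)
      ((measurable_const.sub hm).max measurable_const).aestronglyMeasurable
  have h2 : ∫⁻ ω, ENNReal.ofReal (max (x - X ω) 0) ∂ℙ
      = ∫⁻ ω, ENNReal.ofReal (x - X ω) ∂ℙ := lintegral_congr fun ω => ofReal_max0 _
  have h3 := lintegral_pospart_eq X hm hpos (x := x)
  have h4 : (∫⁻ s in Set.Ico 0 x, ENNReal.ofReal (cdfOf X s)).toReal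
      = ∫ s in Set.Ico 0 x, cdfOf X s :=
    (integral_eq_lintegral_of_nonneg_ae (ae_of_all _ fun s => cdfOf_nonneg X s)
      (cdfOf_measurable X).aestronglyMeasurable).symm
  rw [h1, h2, h3, h4]

include hm hpos in
lemma integrableOn_umax (hint : Integrable X) {u : ℝ} (hu1 : u ≤ 1) :
    IntegrableOn (fun s => max (u - cdfOf X s) 0) (Set.Ici (0:ℝ)) := by
  refine ⟨((measurable_const.sub (cdfOf_measurable X)).max
    measurable_const).aestronglyMeasurable, ?_⟩
  refine (hasFiniteIntegral_iff_ofReal (ae_of_all _ fun s => le_max_right _ _)).2 ?_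
  have hb : ∫⁻ s in Set.Ici (0:ℝ), ENNReal.ofReal (max (u - cdfOf X s) 0)
      ≤ ∫⁻ s in Set.Ici (0:ℝ), ENNReal.ofReal (1 - cdfOf X s) := by
    refine lintegral_mono fun s => ?_
    rw [ofReal_max0]
    exact ENNReal.ofReal_le_ofReal (sub_le_sub_right hu1 _)
  have hfin : ∫⁻ s in Set.Ici (0:ℝ), ENNReal.ofReal (1 - cdfOf X s) < ⊤ := by
    rw [← lintegral_self_eq X hm hpos]
    exact (hasFiniteIntegral_iff_ofReal (ae_of_all _ hpos)).1 hint.2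
  exact lt_of_le_of_lt hb hfin

include hm hpos in
lemma lorenz_one (hint : Integrable X) : lorenz X 1 = ∫ ω, X ω ∂ℙ := by
  rw [lorenz_eq X hm hpos one_pos le_rfl]
  have h1 : ∀ s : ℝ, max (1 - cdfOf X s) 0 = 1 - cdfOf X s :=
    fun s => max_eq_left (sub_nonneg.2 (cdfOf_le_one X s))
  calc ∫ s in Set.Ici (0:ℝ), max (1 - cdfOf X s) 0
      = (∫⁻ s in Set.Ici (0:ℝ), ENNReal.ofReal (max (1 - cdfOf X s) 0)).toReal :=
        integral_eq_lintegral_of_nonneg_ae (ae_of_all _ fun s => le_max_right _ _)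
          ((measurable_const.sub (cdfOf_measurable X)).max measurable_const).aestronglyMeasurable
    _ = (∫⁻ s in Set.Ici (0:ℝ), ENNReal.ofReal (1 - cdfOf X s)).toReal := by
        congr 1; exact lintegral_congr fun s => ofReal_max0 _
    _ = (∫⁻ ω, ENNReal.ofReal (X ω) ∂ℙ).toReal := by rw [lintegral_self_eq X hm hpos]
    _ = ∫ ω, X ω ∂ℙ :=
        (integral_eq_lintegral_of_nonneg_ae (ae_of_all _ hpos) hm.aestronglyMeasurable).symm

end Bridge

section Main
variable {Ω : Type*} [MeasureSpace Ω] [IsProbabilityMeasure (ℙ : Measure Ω)]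
    (X : ℕ → Ω → ℝ) (hm : ∀ n, Measurable (X n))
    (hint : ∀ n, Integrable (X n))
    (hpos : ∀ n ω, 0 ≤ X n ω)
    (hmart : ∀ n, (ℙ : Measure Ω)[X (n + 1) |
        ⨆ j ∈ Finset.range (n + 1), MeasurableSpace.comap (X j) (borel ℝ)]
        =ᵐ[ℙ] X n)

include hm hint hmart in
lemma pospart_mono (n : ℕ) (x : ℝ) :
    ∫ ω, max (x - X n ω) 0 ∂ℙ ≤ ∫ ω, max (x - X (n + 1) ω) 0 ∂ℙ := by
  have h𝒢 : (⨆ j ∈ Finset.range (n + 1), MeasurableSpace.comap (X j) (borel ℝ))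
      ≤ MeasureSpace.toMeasurableSpace := by
    refine iSup_le fun j => iSup_le fun _ => ?_
    rw [MeasurableSpace.comap_le_iff_le_map]
    exact fun s hs => hm j hs
  set A := {ω | X n ω ≤ x} with hAdef
  have hAm : MeasurableSet A := hm n measurableSet_Iic
  have hA𝒢 : MeasurableSet[⨆ j ∈ Finset.range (n + 1),
      MeasurableSpace.comap (X j) (borel ℝ)] A := by
    have hle : MeasurableSpace.comap (X n) (borel ℝ)
        ≤ ⨆ j ∈ Finset.range (n + 1), MeasurableSpace.comap (X j) (borel ℝ) :=
      le_iSup₂ (f := fun j (_ : j ∈ Finset.range (n + 1)) =>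
        MeasurableSpace.comap (X j) (borel ℝ)) n (Finset.self_mem_range_succ n)
    exact hle _ ⟨Set.Iic x, measurableSet_Iic, rfl⟩
  have key : ∫ ω in A, X n ω ∂ℙ = ∫ ω in A, X (n + 1) ω ∂ℙ := by
    calc ∫ ω in A, X n ω ∂ℙ
        = ∫ ω in A, ((ℙ : Measure Ω)[X (n + 1)|⨆ j ∈ Finset.range (n + 1),
            MeasurableSpace.comap (X j) (borel ℝ)]) ω ∂ℙ := by
          refine setIntegral_congr_ae hAm ?_
          filter_upwards [hmart n] with ω hω _
          exact hω.symm
      _ = ∫ ω in A, X (n + 1) ω ∂ℙ := setIntegral_condExp h𝒢 (hint (n + 1)) hA𝒢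
  have heq1 : ∫ ω, max (x - X n ω) 0 ∂ℙ = ∫ ω in A, (x - X n ω) ∂ℙ := by
    rw [← integral_indicator hAm]
    refine integral_congr_ae (ae_of_all _ fun ω => ?_)
    by_cases h : ω ∈ A
    · simp only [Set.indicator_of_mem h]
      exact max_eq_left (sub_nonneg.2 h)
    · simp only [Set.indicator_of_notMem h]
      have h' : ¬ X n ω ≤ x := h
      exact max_eq_right (sub_nonpos.2 (le_of_not_ge h'))
  have heq2 : ∫ ω in A, (x - X n ω) ∂ℙ = ∫ ω in A, (x - X (n + 1) ω) ∂ℙ := by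
    rw [integral_sub (integrableOn_const (C := x) (μ := ℙ) (measure_lt_top _ _).ne)
        ((hint n).integrableOn),
      integral_sub (integrableOn_const (C := x) (μ := ℙ) (measure_lt_top _ _).ne)
        ((hint (n + 1)).integrableOn), key]
  have hle2 : ∫ ω in A, (x - X (n + 1) ω) ∂ℙ ≤ ∫ ω, max (x - X (n + 1) ω) 0 ∂ℙ := by
    rw [← integral_indicator hAm]
    refine integral_mono (((integrable_const x).sub (hint (n + 1))).indicator hAm)
      ((integrable_const x).sub (hint (n + 1))).pos_part (fun ω => ?_)
    by_cases h : ω ∈ A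
    · simp only [Set.indicator_of_mem h]; exact le_max_left _ _
    · simp only [Set.indicator_of_notMem h]; exact le_max_right _ _
  rw [heq1, heq2]
  exact hle2

end Main

/-- Along a nonnegative mean-one martingale, the Lorenz curve is
pointwise nonincreasing in time. -/
theorem lorenz_nonincreasing_along_martingale {Ω : Type*} [MeasureSpace Ω]
    [IsProbabilityMeasure (ℙ : Measure Ω)]
    (X : ℕ → Ω → ℝ) (hm : ∀ n, Measurable (X n))
    (hint : ∀ n, Integrable (X n))
    (hpos : ∀ n ω, 0 ≤ X n ω) (hmean : ∀ n, ∫ ω, X n ω = 1)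
    (hmart : ∀ n, (ℙ : Measure Ω)[X (n + 1) |
        ⨆ j ∈ Finset.range (n + 1), MeasurableSpace.comap (X j) (borel ℝ)]
        =ᵐ[ℙ] X n) :
    ∀ n, ∀ u ∈ Set.Icc (0:ℝ) 1, lorenz (X (n + 1)) u ≤ lorenz (X n) u := by
  intro n u hu
  obtain ⟨hu0, hu1⟩ := hu
  rcases eq_or_lt_of_le hu0 with h0 | h0
  · rw [← h0]
    simp [lorenz]
  rcases eq_or_lt_of_le hu1 with h1 | h1
  · subst h1
    rw [lorenz_one (X (n + 1)) (hm _) (hpos _) (hint _),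
      lorenz_one (X n) (hm _) (hpos _) (hint _), hmean, hmean]
  set xs := quantile (cdfOf (X (n + 1))) u with hxs
  have hxnn : 0 ≤ xs := quantile_nonneg (X (n + 1)) (hpos _) h0 h1 (hm _)
  have hIcofin : volume (Set.Ico (0:ℝ) xs) < ⊤ := by
    rw [Real.volume_Ico]; exact ENNReal.ofReal_lt_top
  have stepA : lorenz (X (n + 1)) u = ∫ s in Set.Ico 0 xs, (u - cdfOf (X (n + 1)) s) := by
    rw [lorenz_eq _ (hm _) (hpos _) h0 hu1]
    have hsing : ∀ᵐ s ∂(volume.restrict (Set.Ici (0:ℝ))), s ≠ xs := by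
      refine ae_restrict_of_ae ?_
      have hset : {s : ℝ | ¬ s ≠ xs} = {xs} := by ext s; simp
      rw [ae_iff, hset]
      exact measure_singleton xs
    have hae : ∀ᵐ s ∂(volume.restrict (Set.Ici (0:ℝ))),
        max (u - cdfOf (X (n + 1)) s) 0
          = (Set.Ico 0 xs).indicator (fun s => u - cdfOf (X (n + 1)) s) s := by
      filter_upwards [hsing, ae_restrict_mem measurableSet_Ici] with s hne hs
      rcases lt_trichotomy s xs with hlt | heq | hgt
      · rw [Set.indicator_of_mem (Set.mem_Ico.2 ⟨hs, hlt⟩)]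
        exact max_eq_left (sub_nonneg.2
          (lt_of_lt_quantile (X (n + 1)) (hpos _) h0 hlt).le)
      · exact absurd heq hne
      · rw [Set.indicator_of_notMem (fun hmem => absurd hmem.2 (not_lt.2 hgt.le))]
        exact max_eq_right (sub_nonpos.2
          (le_cdfOf_of_quantile_lt (X (n + 1)) (hm _) h1 hgt))
    rw [integral_congr_ae hae, setIntegral_indicator measurableSet_Ico,
      Set.inter_eq_right.2 (fun s hs => hs.1)]
  have stepB : ∀ m, ∫ s in Set.Ico 0 xs, (u - cdfOf (X m) s)
      = u * xs - ∫ s in Set.Ico 0 xs, cdfOf (X m) s := by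
    intro m
    rw [integral_sub (integrableOn_const (C := u) hIcofin.ne)
      (integrableOn_cdf (X m) (hm m) (hpos m)),
      setIntegral_const, measureReal_def, Real.volume_Ico, sub_zero, ENNReal.toReal_ofReal hxnn,
      smul_eq_mul, mul_comm]
  have stepC : ∫ s in Set.Ico 0 xs, cdfOf (X n) s
      ≤ ∫ s in Set.Ico 0 xs, cdfOf (X (n + 1)) s := by
    rw [← integral_pospart (X n) (hm n) (hpos n) xs,
      ← integral_pospart (X (n + 1)) (hm (n + 1)) (hpos (n + 1)) xs]
    exact pospart_mono X hm hint hmart n xs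
  have stepD : ∫ s in Set.Ico 0 xs, (u - cdfOf (X n) s) ≤ lorenz (X n) u := by
    rw [lorenz_eq (X n) (hm n) (hpos n) h0 hu1]
    calc ∫ s in Set.Ico 0 xs, (u - cdfOf (X n) s)
        ≤ ∫ s in Set.Ico 0 xs, max (u - cdfOf (X n) s) 0 := by
          refine integral_mono ((integrableOn_const hIcofin.ne).sub
            (integrableOn_cdf (X n) (hm n) (hpos n)))
            ((integrableOn_umax (X n) (hm n) (hpos n) (hint n) hu1).mono_set
              Set.Ico_subset_Ici_self) (fun s => le_max_left _ _)
      _ ≤ ∫ s in Set.Ici (0:ℝ), max (u - cdfOf (X n) s) 0 :=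
          setIntegral_mono_set (integrableOn_umax (X n) (hm n) (hpos n) (hint n) hu1)
            (ae_of_all _ fun s => le_max_right _ _)
            (HasSubset.Subset.eventuallyLE Set.Ico_subset_Ici_self)
  calc lorenz (X (n + 1)) u
      = u * xs - ∫ s in Set.Ico 0 xs, cdfOf (X (n + 1)) s := by rw [stepA, stepB]
    _ ≤ u * xs - ∫ s in Set.Ico 0 xs, cdfOf (X n) s := sub_le_sub_left stepC _
    _ = ∫ s in Set.Ico 0 xs, (u - cdfOf (X n) s) := (stepB n).symm
    _ ≤ lorenz (X n) u := stepD
end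

section
/- Given two Lorenz curves L_a, L_b, the greatest convex function lying below both (the lower convex envelope of min(L_a, L_b)) is a Lorenz curve, and it is the greatest element of the set of Lorenz curves L with L ≤ L_a and L ≤ L_b pointwise. -/
/-- A Lorenz curve: a continuous convex function on `[0,1]` with
`L(0)=0`, `L(1)=1` and `0 ≤ L(u) ≤ u`. -/
def IsLorenzCurve (L : ℝ → ℝ) : Prop :=
  ContinuousOn L (Set.Icc (0:ℝ) 1) ∧ ConvexOn ℝ (Set.Icc (0:ℝ) 1) L ∧
    L 0 = 0 ∧ L 1 = 1 ∧ ∀ u ∈ Set.Icc (0:ℝ) 1, 0 ≤ L u ∧ L u ≤ u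

/-- Lower convex envelope of `f` on `[0,1]`: the pointwise supremum of all
convex functions lying below `f` on `[0,1]`. -/
noncomputable def convexEnvelope (f : ℝ → ℝ) : ℝ → ℝ := fun x =>
  sSup {y : ℝ | ∃ g : ℝ → ℝ, ConvexOn ℝ (Set.Icc (0:ℝ) 1) g ∧
    (∀ u ∈ Set.Icc (0:ℝ) 1, g u ≤ f u) ∧ y = g x}

/-- The lower convex envelope of the pointwise minimum of two Lorenz curves is
a Lorenz curve, and it is the greatest Lorenz curve below both. -/
theorem convexEnvelope_min_isLorenz (La Lb : ℝ → ℝ)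
    (ha : IsLorenzCurve La) (hb : IsLorenzCurve Lb) :
    IsLorenzCurve (convexEnvelope (fun u => min (La u) (Lb u))) ∧
    ∀ L : ℝ → ℝ, IsLorenzCurve L →
      (∀ u ∈ Set.Icc (0:ℝ) 1, L u ≤ La u) →
      (∀ u ∈ Set.Icc (0:ℝ) 1, L u ≤ Lb u) →
      ∀ u ∈ Set.Icc (0:ℝ) 1, L u ≤ convexEnvelope (fun u => min (La u) (Lb u)) u := by
  obtain ⟨haC, haCv, ha0, ha1, hab⟩ := ha
  obtain ⟨hbC, hbCv, hb0, hb1, hbb⟩ := hb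
  set f : ℝ → ℝ := fun u => min (La u) (Lb u) with hf
  set S : ℝ → Set ℝ := fun x => {y : ℝ | ∃ g : ℝ → ℝ,
    ConvexOn ℝ (Set.Icc (0:ℝ) 1) g ∧ (∀ u ∈ Set.Icc (0:ℝ) 1, g u ≤ f u) ∧ y = g x} with hS
  have hEdef : ∀ x, convexEnvelope f x = sSup (S x) := fun x => rfl
  -- membership lemma
  have memS : ∀ g : ℝ → ℝ, ConvexOn ℝ (Set.Icc (0:ℝ) 1) g →
      (∀ u ∈ Set.Icc (0:ℝ) 1, g u ≤ f u) → ∀ x, g x ∈ S x := by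
    intro g hg hgle x
    exact ⟨g, hg, hgle, rfl⟩
  -- the zero function
  have h0le : ∀ u ∈ Set.Icc (0:ℝ) 1, (0:ℝ) ≤ f u := by
    intro u hu
    exact le_min (hab u hu).1 (hbb u hu).1
  have mem0 : ∀ x, (0:ℝ) ∈ S x := by
    intro x
    exact ⟨fun _ => 0, convexOn_const 0 (convex_Icc 0 1), h0le, rfl⟩
  have hne : ∀ x, (S x).Nonempty := fun x => ⟨0, mem0 x⟩
  have hbdd : ∀ x ∈ Set.Icc (0:ℝ) 1, BddAbove (S x) := by
    intro x hx
    refine ⟨f x, ?_⟩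
    rintro y ⟨g, hg, hgle, rfl⟩
    exact hgle x hx
  have le_env : ∀ g : ℝ → ℝ, ConvexOn ℝ (Set.Icc (0:ℝ) 1) g →
      (∀ u ∈ Set.Icc (0:ℝ) 1, g u ≤ f u) → ∀ x ∈ Set.Icc (0:ℝ) 1, g x ≤ convexEnvelope f x := by
    intro g hg hgle x hx
    rw [hEdef]
    exact le_csSup (hbdd x hx) (memS g hg hgle x)
  have env_le : ∀ x ∈ Set.Icc (0:ℝ) 1, convexEnvelope f x ≤ f x := by
    intro x hx
    rw [hEdef]
    refine csSup_le (hne x) ?_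
    rintro y ⟨g, hg, hgle, rfl⟩
    exact hgle x hx
  have env_nonneg : ∀ x ∈ Set.Icc (0:ℝ) 1, 0 ≤ convexEnvelope f x := by
    intro x hx
    rw [hEdef]
    exact le_csSup (hbdd x hx) (mem0 x)
  have env_le_id : ∀ x ∈ Set.Icc (0:ℝ) 1, convexEnvelope f x ≤ x := by
    intro x hx
    exact (env_le x hx).trans ((min_le_left _ _).trans (hab x hx).2)
  -- the function g1 = max (La + Lb - id) 0
  set g1 : ℝ → ℝ := fun u => max (La u + Lb u - u) 0 with hg1
  have hg1conv : ConvexOn ℝ (Set.Icc (0:ℝ) 1) g1 := by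
    have h1 : ConvexOn ℝ (Set.Icc (0:ℝ) 1) (fun u => La u + Lb u - u) := by
      have := (haCv.add hbCv).sub (concaveOn_id (convex_Icc (0:ℝ) 1))
      exact this
    have := h1.sup (convexOn_const (0:ℝ) (convex_Icc (0:ℝ) 1))
    simpa [Pi.sup_def] using this
  have hg1le : ∀ u ∈ Set.Icc (0:ℝ) 1, g1 u ≤ f u := by
    intro u hu
    refine le_min (max_le ?_ (hab u hu).1) (max_le ?_ (hbb u hu).1)
    · have := (hbb u hu).2; linarith
    · have := (hab u hu).2; linarith
  have hg1one : g1 1 = 1 := by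
    rw [hg1]; simp [ha1, hb1]
  have hg1cont : ContinuousOn g1 (Set.Icc (0:ℝ) 1) := by
    have := ((haC.add hbC).sub continuousOn_id).sup (continuousOn_const (c := (0:ℝ)))
    simpa [hg1, max_def] using this
  -- E is convex
  have hEconv : ConvexOn ℝ (Set.Icc (0:ℝ) 1) (convexEnvelope f) := by
    refine ⟨convex_Icc 0 1, ?_⟩
    intro x hx y hy a b ha' hb' hab'
    have hxy : a • x + b • y ∈ Set.Icc (0:ℝ) 1 := (convex_Icc (0:ℝ) 1) hx hy ha' hb' hab'
    rw [hEdef]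
    refine csSup_le (hne _) ?_
    rintro z ⟨g, hg, hgle, rfl⟩
    calc g (a • x + b • y) ≤ a • g x + b • g y := hg.2 hx hy ha' hb' hab'
      _ ≤ a • convexEnvelope f x + b • convexEnvelope f y := by
          have h1 := le_env g hg hgle x hx
          have h2 := le_env g hg hgle y hy
          simp only [smul_eq_mul]
          exact add_le_add (mul_le_mul_of_nonneg_left h1 ha')
            (mul_le_mul_of_nonneg_left h2 hb')
  -- values at endpoints
  have hmem0 : (0:ℝ) ∈ Set.Icc (0:ℝ) 1 := by norm_num
  have hmem1 : (1:ℝ) ∈ Set.Icc (0:ℝ) 1 := by norm_num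
  have hE0 : convexEnvelope f 0 = 0 := by
    refine le_antisymm ?_ (env_nonneg 0 hmem0)
    have := env_le 0 hmem0
    rw [hf] at this
    simpa [ha0, hb0] using this
  have hE1 : convexEnvelope f 1 = 1 := by
    refine le_antisymm ?_ ?_
    · have := env_le 1 hmem1
      rw [hf] at this
      simpa [ha1, hb1] using this
    · have := le_env g1 hg1conv hg1le 1 hmem1
      rwa [hg1one] at this
  -- continuity
  have hcont : ContinuousOn (convexEnvelope f) (Set.Icc (0:ℝ) 1) := by
    intro x hx
    rcases eq_or_ne x 0 with rfl | hx0
    · rw [ContinuousWithinAt, hE0]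
      have hub : ∀ᶠ u in nhdsWithin 0 (Set.Icc (0:ℝ) 1), convexEnvelope f u ≤ u := by
        filter_upwards [eventually_mem_nhdsWithin] with u hu using env_le_id u hu
      have hlb : ∀ᶠ u in nhdsWithin 0 (Set.Icc (0:ℝ) 1), (0:ℝ) ≤ convexEnvelope f u := by
        filter_upwards [eventually_mem_nhdsWithin] with u hu using env_nonneg u hu
      exact tendsto_of_tendsto_of_tendsto_of_le_of_le' tendsto_const_nhds
        (Filter.Tendsto.mono_left Filter.tendsto_id nhdsWithin_le_nhds) hlb hub
    rcases eq_or_ne x 1 with rfl | hx1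
    · rw [ContinuousWithinAt, hE1]
      have hub : ∀ᶠ u in nhdsWithin 1 (Set.Icc (0:ℝ) 1), convexEnvelope f u ≤ u := by
        filter_upwards [eventually_mem_nhdsWithin] with u hu using env_le_id u hu
      have hlb : ∀ᶠ u in nhdsWithin 1 (Set.Icc (0:ℝ) 1), g1 u ≤ convexEnvelope f u := by
        filter_upwards [eventually_mem_nhdsWithin] with u hu
          using le_env g1 hg1conv hg1le u hu
      have htg1 : Filter.Tendsto g1 (nhdsWithin 1 (Set.Icc (0:ℝ) 1)) (nhds 1) := by
        have := hg1cont 1 hmem1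
        rwa [ContinuousWithinAt, hg1one] at this
      exact tendsto_of_tendsto_of_tendsto_of_le_of_le' htg1
        (Filter.Tendsto.mono_left Filter.tendsto_id nhdsWithin_le_nhds) hlb hub
    · have hxIoo : x ∈ Set.Ioo (0:ℝ) 1 := ⟨hx.1.lt_of_ne' hx0, hx.2.lt_of_ne hx1⟩
      have hint : ContinuousOn (convexEnvelope f) (Set.Ioo (0:ℝ) 1) := by
        have := hEconv.continuousOn_interior
        rwa [interior_Icc] at this
      exact ((hint x hxIoo).continuousAt
        (Ioo_mem_nhds hxIoo.1 hxIoo.2)).continuousWithinAt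
  refine ⟨⟨hcont, hEconv, hE0, hE1, fun u hu => ⟨env_nonneg u hu, env_le_id u hu⟩⟩, ?_⟩
  intro L hL h1 h2 u hu
  exact le_env L hL.2.1 (fun v hv => le_min (h1 v hv) (h2 v hv)) u hu
end

section
/- The set of Lorenz curves (continuous convex functions L:[0,1]→[0,1] with L(0)=0, L(1)=1, L(u) ≤ u) partially ordered by pointwise inequality forms a lattice, with join given by pointwise maximum and meet given by the lower convex envelope of the pointwise minimum. -/
/-- Pointwise order on Lorenz curves (on `[0,1]`). -/
def LorenzLE (L₁ L₂ : ℝ → ℝ) : Prop := ∀ u ∈ Set.Icc (0:ℝ) 1, L₁ u ≤ L₂ u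

/-- The set of Lorenz curves ordered pointwise is a lattice: the pointwise
maximum is the least upper bound and the lower convex envelope of the
pointwise minimum is the greatest lower bound. -/
theorem lorenz_lattice (La Lb : ℝ → ℝ)
    (ha : IsLorenzCurve La) (hb : IsLorenzCurve Lb) :
    (IsLorenzCurve (fun u => max (La u) (Lb u)) ∧
      LorenzLE La (fun u => max (La u) (Lb u)) ∧
      LorenzLE Lb (fun u => max (La u) (Lb u)) ∧
      ∀ M : ℝ → ℝ, IsLorenzCurve M → LorenzLE La M → LorenzLE Lb M →
        LorenzLE (fun u => max (La u) (Lb u)) M) ∧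
    (IsLorenzCurve (convexEnvelope (fun u => min (La u) (Lb u))) ∧
      LorenzLE (convexEnvelope (fun u => min (La u) (Lb u))) La ∧
      LorenzLE (convexEnvelope (fun u => min (La u) (Lb u))) Lb ∧
      ∀ M : ℝ → ℝ, IsLorenzCurve M → LorenzLE M La → LorenzLE M Lb →
        LorenzLE M (convexEnvelope (fun u => min (La u) (Lb u)))) := by
  obtain ⟨haC, haV, ha0, ha1, haB⟩ := ha
  obtain ⟨hbC, hbV, hb0, hb1, hbB⟩ := hb
  have h0I : (0:ℝ) ∈ Set.Icc (0:ℝ) 1 := by norm_num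
  have h1I : (1:ℝ) ∈ Set.Icc (0:ℝ) 1 := by norm_num
  constructor
  · refine ⟨⟨by simpa [Pi.sup_def] using haC.sup' hbC, ?_, by simp [ha0, hb0], by simp [ha1, hb1], ?_⟩, ?_, ?_, ?_⟩
    · simpa [Pi.sup_def] using haV.sup hbV
    · intro u hu
      exact ⟨le_max_of_le_left (haB u hu).1, max_le (haB u hu).2 (hbB u hu).2⟩
    · intro u hu; exact le_max_left _ _
    · intro u hu; exact le_max_right _ _
    · intro M _ h1 h2 u hu; exact max_le (h1 u hu) (h2 u hu)
  · set f : ℝ → ℝ := fun u => min (La u) (Lb u) with hf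
    set S : ℝ → Set ℝ := fun x => {y : ℝ | ∃ g : ℝ → ℝ,
      ConvexOn ℝ (Set.Icc (0:ℝ) 1) g ∧
      (∀ u ∈ Set.Icc (0:ℝ) 1, g u ≤ f u) ∧ y = g x} with hS
    have hE : ∀ x, convexEnvelope f x = sSup (S x) := fun _ => rfl
    set g₀ : ℝ → ℝ := fun u => max 0 (La u + Lb u - u) with hg₀
    have hg₀conv : ConvexOn ℝ (Set.Icc (0:ℝ) 1) g₀ := by
      have h1 : ConvexOn ℝ (Set.Icc (0:ℝ) 1) (fun u => La u + Lb u - u) := by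
        have := (haV.add hbV).sub (concaveOn_id (convex_Icc (0:ℝ) 1))
        simpa [Pi.sub_def] using this
      simpa [Pi.sup_def, hg₀] using (convexOn_const (0:ℝ) (convex_Icc (0:ℝ) 1)).sup h1
    have hg₀le : ∀ u ∈ Set.Icc (0:ℝ) 1, g₀ u ≤ f u := by
      intro u hu
      refine max_le (le_min (haB u hu).1 (hbB u hu).1) (le_min ?_ ?_)
      · linarith [(hbB u hu).2]
      · linarith [(haB u hu).2]
    have hmem : ∀ x, g₀ x ∈ S x := fun x => ⟨g₀, hg₀conv, hg₀le, rfl⟩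
    have hne : ∀ x, (S x).Nonempty := fun x => ⟨g₀ x, hmem x⟩
    have hbdd : ∀ x ∈ Set.Icc (0:ℝ) 1, BddAbove (S x) := by
      intro x hx
      refine ⟨f x, ?_⟩
      rintro y ⟨g, hg, hle, rfl⟩
      exact hle x hx
    have hEle : ∀ x ∈ Set.Icc (0:ℝ) 1, convexEnvelope f x ≤ f x := by
      intro x hx
      rw [hE]
      refine csSup_le (hne x) ?_
      rintro y ⟨g, hg, hle, rfl⟩
      exact hle x hx
    have hg₀E : ∀ x ∈ Set.Icc (0:ℝ) 1, g₀ x ≤ convexEnvelope f x := by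
      intro x hx
      rw [hE]
      exact le_csSup (hbdd x hx) (hmem x)
    have hE0 : convexEnvelope f 0 = 0 := by
      refine le_antisymm ?_ ?_
      · have := hEle 0 h0I
        simpa [hf, ha0, hb0] using this
      · have := hg₀E 0 h0I
        simpa [hg₀, ha0, hb0] using this
    have hE1 : convexEnvelope f 1 = 1 := by
      refine le_antisymm ?_ ?_
      · have := hEle 1 h1I
        simpa [hf, ha1, hb1] using this
      · have := hg₀E 1 h1I
        simpa [hg₀, ha1, hb1] using this
    have hEbounds : ∀ u ∈ Set.Icc (0:ℝ) 1, 0 ≤ convexEnvelope f u ∧ convexEnvelope f u ≤ u := by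
      intro u hu
      constructor
      · exact le_trans (le_max_left _ _) (hg₀E u hu)
      · exact le_trans (hEle u hu) (le_trans (min_le_left _ _) (haB u hu).2)
    have hEconv : ConvexOn ℝ (Set.Icc (0:ℝ) 1) (convexEnvelope f) := by
      refine ⟨convex_Icc _ _, ?_⟩
      intro x hx y hy a b ha' hb' hab
      simp only [smul_eq_mul]
      have hxy : a * x + b * y ∈ Set.Icc (0:ℝ) 1 :=
        (convex_Icc (0:ℝ) 1) hx hy ha' hb' hab
      rw [hE (a * x + b * y)]
      refine csSup_le (hne _) ?_
      rintro z ⟨g, hg, hle, rfl⟩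
      have h1 : g (a * x + b * y) ≤ a * g x + b * g y := by
        have := hg.2 hx hy ha' hb' hab
        simpa [smul_eq_mul] using this
      refine h1.trans (add_le_add ?_ ?_)
      · exact mul_le_mul_of_nonneg_left (le_trans (le_csSup (hbdd x hx) ⟨g, hg, hle, rfl⟩)
          (le_of_eq (hE x).symm)) ha'
      · exact mul_le_mul_of_nonneg_left (le_trans (le_csSup (hbdd y hy) ⟨g, hg, hle, rfl⟩)
          (le_of_eq (hE y).symm)) hb'
    have hEcont : ContinuousOn (convexEnvelope f) (Set.Icc (0:ℝ) 1) := by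
      intro x hx
      rcases eq_or_lt_of_le hx.1 with h0 | h0
      · -- x = 0 : squeeze between 0 and id
        subst h0
        show Filter.Tendsto _ _ (nhds (convexEnvelope f 0))
        rw [hE0]
        have hup : Filter.Tendsto (fun u : ℝ => u) (nhdsWithin 0 (Set.Icc (0:ℝ) 1)) (nhds 0) :=
          Filter.tendsto_id.mono_left nhdsWithin_le_nhds
        refine tendsto_of_tendsto_of_tendsto_of_le_of_le'
          (tendsto_const_nhds) hup ?_ ?_
        · filter_upwards [self_mem_nhdsWithin] with u hu
          exact (hEbounds u hu).1
        · filter_upwards [self_mem_nhdsWithin] with u hu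
          exact (hEbounds u hu).2
      rcases eq_or_lt_of_le hx.2 with h1 | h1
      · -- x = 1 : squeeze between g₀ and id
        subst h1
        show Filter.Tendsto _ _ (nhds (convexEnvelope f 1))
        rw [hE1]
        have hlow : Filter.Tendsto g₀ (nhdsWithin 1 (Set.Icc (0:ℝ) 1)) (nhds 1) := by
          have hcg : ContinuousWithinAt g₀ (Set.Icc (0:ℝ) 1) 1 := by
            have := ContinuousWithinAt.sup' (continuousWithinAt_const : ContinuousWithinAt (fun _ : ℝ => (0:ℝ)) (Set.Icc (0:ℝ) 1) 1)
              (((haC 1 h1I).add (hbC 1 h1I)).sub continuousWithinAt_id)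
            simpa [Pi.sup_def, Pi.add_def, Pi.sub_def, hg₀] using this
          have h11 : g₀ 1 = 1 := by simp [hg₀, ha1, hb1]
          have hcg' : Filter.Tendsto g₀ (nhdsWithin 1 (Set.Icc (0:ℝ) 1)) (nhds (g₀ 1)) := hcg
          rw [h11] at hcg'
          exact hcg'
        have hup : Filter.Tendsto (fun u : ℝ => u) (nhdsWithin 1 (Set.Icc (0:ℝ) 1)) (nhds 1) :=
          Filter.tendsto_id.mono_left nhdsWithin_le_nhds
        refine tendsto_of_tendsto_of_tendsto_of_le_of_le' hlow hup ?_ ?_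
        · filter_upwards [self_mem_nhdsWithin] with u hu
          exact hg₀E u hu
        · filter_upwards [self_mem_nhdsWithin] with u hu
          exact (hEbounds u hu).2
      · -- interior point
        have hxIoo : x ∈ Set.Ioo (0:ℝ) 1 := ⟨h0, h1⟩
        have hco := hEconv.continuousOn_interior
        rw [interior_Icc] at hco
        have hcx : ContinuousAt (convexEnvelope f) x :=
          (hco x hxIoo).continuousAt (Ioo_mem_nhds h0 h1)
        exact hcx.continuousWithinAt
    refine ⟨⟨hEcont, hEconv, hE0, hE1, hEbounds⟩, ?_, ?_, ?_⟩
    · intro u hu; exact le_trans (hEle u hu) (min_le_left _ _)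
    · intro u hu; exact le_trans (hEle u hu) (min_le_right _ _)
    · intro M hM hMa hMb u hu
      have hmemM : M u ∈ S u :=
        ⟨M, hM.2.1, fun v hv => le_min (hMa v hv) (hMb v hv), rfl⟩
      rw [hE u] at *
      exact le_csSup (hbdd u hu) hmemM
end

section
/- The function V(x) = −(1−x)·ln(1−x) on [0,1) (extended by V(1)=0) is the unique solution of the differential equation V'(x) = 1 − V(x)/(1−x) with boundary condition V(0) = 0, and satisfies 0 ≤ V(x) ≤ x for all x ∈ [0,1]. -/
/-- Minimal expected betting volume `V(x) = −(1−x)·ln(1−x)`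
(with `V(1) = 0`, since `Real.log 0 = 0`). -/
noncomputable def betVolume (x : ℝ) : ℝ := -(1 - x) * Real.log (1 - x)

lemma betVolume_hasDerivAt {x : ℝ} (hx : x < 1) :
    HasDerivAt betVolume (1 - betVolume x / (1 - x)) x := by
  have hne : (1 : ℝ) - x ≠ 0 := by linarith
  have h1 : HasDerivAt (fun y : ℝ => -(1 - y)) 1 x := by
    have := ((hasDerivAt_id x).const_sub 1).neg
    simp only [neg_neg] at this
    exact this
  have h2 : HasDerivAt (fun y : ℝ => Real.log (1 - y)) ((1 - x)⁻¹ * (-1)) x :=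
    (Real.hasDerivAt_log hne).comp x (by simpa using (hasDerivAt_id x).const_sub 1)
  have h := h1.mul h2
  refine h.congr_deriv ?_
  unfold betVolume
  field_simp
  ring

/-- `V(x) = −(1−x)ln(1−x)` is the unique solution on `[0,1)` of
`V' = 1 − V/(1−x)` with `V(0) = 0`, and satisfies `0 ≤ V(x) ≤ x` on `[0,1]`. -/
theorem betVolume_ode_unique_and_bounds :
    (∀ x ∈ Set.Ico (0:ℝ) 1,
      HasDerivAt betVolume (1 - betVolume x / (1 - x)) x) ∧
    betVolume 0 = 0 ∧ betVolume 1 = 0 ∧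
    (∀ W : ℝ → ℝ,
      (∀ x ∈ Set.Ico (0:ℝ) 1, HasDerivAt W (1 - W x / (1 - x)) x) →
      W 0 = 0 → ∀ x ∈ Set.Ico (0:ℝ) 1, W x = betVolume x) ∧
    (∀ x ∈ Set.Icc (0:ℝ) 1, 0 ≤ betVolume x ∧ betVolume x ≤ x) := by
  refine ⟨fun x hx => betVolume_hasDerivAt hx.2, by simp [betVolume], by simp [betVolume],
    ?_, ?_⟩
  · intro W hW hW0 x hx
    set g : ℝ → ℝ := fun t => (W t - betVolume t) * (1 - t)⁻¹ with hg
    have hgd : ∀ t ∈ Set.Ico (0:ℝ) 1, HasDerivAt g 0 t := by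
      intro t ht
      have hne : (1 : ℝ) - t ≠ 0 := by linarith [ht.2]
      have hinv : HasDerivAt (fun y : ℝ => (1 - y)⁻¹) ((1 - t)⁻¹ ^ 2) t := by
        have := ((hasDerivAt_id t).const_sub 1).inv hne
        refine this.congr_deriv ?_
        simp only [id]
        field_simp
      have hsub : HasDerivAt (fun y => W y - betVolume y)
          ((1 - W t / (1 - t)) - (1 - betVolume t / (1 - t))) t :=
        (hW t ht).sub (betVolume_hasDerivAt ht.2)
      have := hsub.mul hinv
      refine (this.congr_deriv ?_)
      field_simp
      ring
    have hcont : ContinuousOn g (Set.Icc 0 x) := by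
      intro t ht
      exact ((hgd t ⟨ht.1, lt_of_le_of_lt ht.2 hx.2⟩).continuousAt).continuousWithinAt
    have hconst := constant_of_has_deriv_right_zero hcont (fun y hy =>
      (hgd y ⟨hy.1, lt_of_lt_of_le hy.2 (le_of_lt hx.2)⟩).hasDerivWithinAt)
    have hgx : g x = g 0 := hconst x ⟨hx.1, le_refl x⟩
    have hg0 : g 0 = 0 := by simp [hg, hW0, betVolume]
    have hne : (1 : ℝ) - x ≠ 0 := by linarith [hx.2]
    have : (W x - betVolume x) * (1 - x)⁻¹ = 0 := by rw [← hg0, ← hgx]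
    rcases mul_eq_zero.1 this with h | h
    · linarith
    · exact absurd h (inv_ne_zero hne)
  · intro x hx
    rcases eq_or_lt_of_le hx.2 with h | h
    · simp [h, betVolume]
    · have hu : 0 < 1 - x := by linarith
      have hlog : Real.log (1 - x) ≤ 0 :=
        Real.log_nonpos (by linarith) (by linarith [hx.1])
      constructor
      · unfold betVolume; nlinarith
      · have := Real.log_le_sub_one_of_pos (inv_pos.2 hu)
        rw [Real.log_inv] at this
        unfold betVolume
        have h2 : -Real.log (1 - x) ≤ (1 - x)⁻¹ - 1 := by linarith
        have h3 : (1 - x) * (-Real.log (1 - x)) ≤ (1 - x) * ((1 - x)⁻¹ - 1) :=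
          mul_le_mul_of_nonneg_left h2 (le_of_lt hu)
        have h4 : (1 - x) * ((1 - x)⁻¹ - 1) = x := by field_simp; ring
        nlinarith
end

section
/- The function V*(x) = −(1−x)ln(1−x) satisfies the Bellman-type inequality V*(a + (b−a)θ) ≤ (b−a)θ + (1−θ)V*(a) + θV*(b) for all 0 ≤ a ≤ b ≤ 1 and 0 ≤ θ ≤ 1. -/
/-- `V*(x) = −(1−x)ln(1−x)` (with `V*(1) = 0`, since `Real.log 0 = 0`). -/
noncomputable def Vstar (x : ℝ) : ℝ := -(1 - x) * Real.log (1 - x)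

lemma Vstar_key (u v θ : ℝ) (hv : 0 ≤ v) (huv : v ≤ u)
    (hθ0 : 0 ≤ θ) (hθ1 : θ ≤ 1) :
    -((1 - θ) * u + θ * v) * Real.log ((1 - θ) * u + θ * v) ≤
      θ * (u - v) + (1 - θ) * (-u * Real.log u) + θ * (-v * Real.log v) := by
  set w := (1 - θ) * u + θ * v with hwdef
  have hvw : v ≤ w := by nlinarith
  have hwu : w ≤ u := by nlinarith
  rcases le_or_gt u 0 with hu | hu
  · have hu0 : u = 0 := le_antisymm hu (hv.trans huv)
    have hv0 : v = 0 := le_antisymm (huv.trans hu) hv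
    have hw0 : w = 0 := by rw [hwdef, hu0, hv0]; ring
    simp [hu0, hv0, hw0]
  rcases le_or_gt w 0 with hw | hw
  · have hw0 : w = 0 := le_antisymm hw ((hv.trans hvw))
    have hv0 : v = 0 := le_antisymm (hvw.trans hw) hv
    have hθ : θ = 1 := by
      have h1 : (1 - θ) * u = 0 := by
        rw [hwdef] at hw0; nlinarith
      rcases mul_eq_zero.1 h1 with h | h
      · linarith
      · linarith
    rw [hw0, hv0, hθ]
    simp
    nlinarith
  · -- main case : 0 < w ≤ u
    have hlog1 : Real.log u - Real.log w ≤ u / w - 1 := by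
      have hpos : 0 < u / w := div_pos hu hw
      have := Real.log_le_sub_one_of_pos hpos
      rwa [Real.log_div (ne_of_gt hu) (ne_of_gt hw)] at this
    have h1 : (1 - θ) * u * (Real.log u - Real.log w) ≤ (1 - θ) * u * (u / w - 1) := by
      apply mul_le_mul_of_nonneg_left hlog1
      nlinarith
    have h1' : (1 - θ) * u * (u / w - 1) ≤ θ * (u - v) := by
      have huw : u - w = θ * (u - v) := by rw [hwdef]; ring
      have hle : (1 - θ) * u ≤ w := by nlinarith
      have := mul_le_mul_of_nonneg_right hle
        (show (0:ℝ) ≤ (u - w) / w from div_nonneg (by linarith) hw.le)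
      calc (1 - θ) * u * (u / w - 1) = (1 - θ) * u * ((u - w) / w) := by
            field_simp
        _ ≤ w * ((u - w) / w) := this
        _ = u - w := by field_simp
        _ = θ * (u - v) := huw
    have h2 : θ * v * (Real.log v - Real.log w) ≤ 0 := by
      rcases eq_or_lt_of_le hv with hv0 | hv0
      · simp [← hv0]
      · have : Real.log v ≤ Real.log w := Real.log_le_log hv0 hvw
        have hθv : 0 ≤ θ * v := mul_nonneg hθ0 hv
        nlinarith
    have hexp : -w * Real.log w = -(1 - θ) * u * Real.log w - θ * v * Real.log w := by
      rw [hwdef]; ring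
    nlinarith [h1, h1', h2]

/-- Bellman-type inequality for the optimal betting volume: deviating from the
optimal scheme by one arbitrary fair binary gamble cannot beat `V*`. -/
theorem Vstar_bellman_inequality (a b θ : ℝ)
    (ha : 0 ≤ a) (hab : a ≤ b) (hb : b ≤ 1) (hθ0 : 0 ≤ θ) (hθ1 : θ ≤ 1) :
    Vstar (a + (b - a) * θ) ≤ (b - a) * θ + (1 - θ) * Vstar a + θ * Vstar b := by
  have key := Vstar_key (1 - a) (1 - b) θ (by linarith) (by linarith) hθ0 hθ1
  have hx : 1 - (a + (b - a) * θ) = (1 - θ) * (1 - a) + θ * (1 - b) := by ring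
  simp only [Vstar, hx]
  have h1 : 1 - (1 - a) = a := by ring
  have h2 : 1 - (1 - b) = b := by ring
  calc -((1 - θ) * (1 - a) + θ * (1 - b)) * Real.log ((1 - θ) * (1 - a) + θ * (1 - b))
      ≤ θ * ((1 - a) - (1 - b)) + (1 - θ) * (-(1 - a) * Real.log (1 - a))
        + θ * (-(1 - b) * Real.log (1 - b)) := key
    _ = (b - a) * θ + (1 - θ) * (-(1 - a) * Real.log (1 - a))
        + θ * (-(1 - b) * Real.log (1 - b)) := by ring
end
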